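/- arXiv:astro-ph/9906051 — 7 statements merged into one kernel-verified Lean document; each statement's English description precedes it below -/
import Mathlib

section
/- For the constant surface brightness disk f(r) = 1/π for r ≤ 1 and f(r) = 0 for r > 1, the width p of the least-squares gaussian fit satisfies the equation p = ln(2p + 1), which has a unique positive solution p ≈ 1.2564312. -/
open MeasureTheory Set Real

/-- Convexity consequence for `exp`: for `0 ≤ u ≤ v`, `exp u ≤ (1 - u/v) + (u/v) * exp v`. -/
lemma exp_convex_aux (u v : ℝ) (hu : 0 ≤ u) (huv : u ≤ v) (hv : 0 < v) :
    Real.exp u ≤ (1 - u / v) + (u / v) * Real.exp v := by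
  have ht : 0 ≤ u / v := div_nonneg hu hv.le
  have ht' : 0 ≤ 1 - u / v := by
    have : u / v ≤ 1 := (div_le_one hv).mpr huv
    linarith
  have h := convexOn_exp.2 (Set.mem_univ (0:ℝ)) (Set.mem_univ v) ht' ht (by ring)
  simp only [smul_eq_mul, mul_zero, zero_add, Real.exp_zero, mul_one] at h
  have hx : (1 - u / v) * 0 + u / v * v = u := by field_simp; ring
  calc Real.exp u = Real.exp ((1 - u / v) * 0 + u / v * v) := by rw [hx]
    _ ≤ (1 - u / v) * 1 + u / v * Real.exp v := by
        simpa [Real.exp_zero] using h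
    _ = (1 - u / v) + (u / v) * Real.exp v := by ring

lemma exp_lt_A : Real.exp 1.2564302 < 3.5128604 := by
  have hx : (1.2564302:ℝ) = 0.6282151 + 0.6282151 := by norm_num
  have hb := Real.exp_bound' (x := 0.6282151) (by norm_num) (by norm_num) (n := 13) (by norm_num)
  have hpos : (0:ℝ) ≤ Real.exp 0.6282151 := (Real.exp_pos _).le
  rw [hx, Real.exp_add]
  calc Real.exp 0.6282151 * Real.exp 0.6282151
      ≤ ((∑ m ∈ Finset.range 13, (0.6282151:ℝ) ^ m / m.factorial) +
          (0.6282151:ℝ) ^ 13 * (13 + 1) / (Nat.factorial 13 * 13)) *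
        ((∑ m ∈ Finset.range 13, (0.6282151:ℝ) ^ m / m.factorial) +
          (0.6282151:ℝ) ^ 13 * (13 + 1) / (Nat.factorial 13 * 13)) :=
        mul_le_mul hb hb hpos (le_trans hpos hb)
    _ < 3.5128604 := by
        norm_num [Finset.sum_range_succ, Nat.factorial]

lemma exp_gt_B : 3.5128644 < Real.exp 1.2564322 := by
  have hx : (1.2564322:ℝ) = 0.6282161 + 0.6282161 := by norm_num
  have hb := Real.sum_le_exp_of_nonneg (x := 0.6282161) (by norm_num) 13
  have hpos : (0:ℝ) ≤ ∑ m ∈ Finset.range 13, (0.6282161:ℝ) ^ m / m.factorial := by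
    positivity
  rw [hx, Real.exp_add]
  calc (3.5128644 : ℝ)
      < (∑ m ∈ Finset.range 13, (0.6282161:ℝ) ^ m / m.factorial) *
        (∑ m ∈ Finset.range 13, (0.6282161:ℝ) ^ m / m.factorial) := by
        norm_num [Finset.sum_range_succ, Nat.factorial]
    _ ≤ Real.exp 0.6282161 * Real.exp 0.6282161 :=
        mul_le_mul hb hb hpos (Real.exp_pos _).le

/-- For `p > 0`, the fixed-point equation is equivalent to `exp p = 2p + 1`. -/
lemma root_iff (p : ℝ) (hp : 0 < p) :
    p = Real.log (2 * p + 1) ↔ Real.exp p = 2 * p + 1 := by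
  have h1 : (0:ℝ) < 2 * p + 1 := by linarith
  constructor
  · intro h
    conv_lhs => rw [h]
    rw [Real.exp_log h1]
  · intro h
    rw [← h, Real.log_exp]

theorem disk_gaussian_fit_width
    (f : ℝ → ℝ)
    (hf : ∀ r : ℝ, 0 ≤ r → f r = if r ≤ 1 then 1 / π else 0) :
    (∀ p : ℝ, 0 < p →
      ((∫ r in Ioi (0:ℝ), f r * (1 - 2 * p * r ^ 2) * r * Real.exp (-p * r ^ 2)) = 0 ↔
        p = Real.log (2 * p + 1))) ∧
    (∃! p : ℝ, 0 < p ∧ p = Real.log (2 * p + 1)) ∧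
    (∀ p : ℝ, 0 < p → p = Real.log (2 * p + 1) → |p - 1.2564312| < 1e-6) := by
  refine ⟨?_, ?_, ?_⟩
  · -- Part 1: the integral equation is equivalent to p = log (2p+1)
    intro p hp
    have hπ : (0:ℝ) < π := Real.pi_pos
    -- rewrite integrand as an indicator
    have hcong : EqOn (fun r => f r * (1 - 2 * p * r ^ 2) * r * Real.exp (-p * r ^ 2))
        ((Ioc (0:ℝ) 1).indicator
          (fun r => (1/π) * ((1 - 2*p*r^2) * r * Real.exp (-p*r^2)))) (Ioi (0:ℝ)) := by
      intro r hr
      simp only [Set.mem_Ioi] at hr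
      show f r * (1 - 2 * p * r ^ 2) * r * Real.exp (-p * r ^ 2) = _
      rw [hf r hr.le]
      by_cases h1 : r ≤ 1
      · have : r ∈ Ioc (0:ℝ) 1 := ⟨hr, h1⟩
        rw [Set.indicator_of_mem this]
        simp [h1]; ring
      · have : r ∉ Ioc (0:ℝ) 1 := fun hm => h1 hm.2
        rw [Set.indicator_of_notMem this]
        simp [h1]
    rw [setIntegral_congr_fun measurableSet_Ioi hcong,
        setIntegral_indicator measurableSet_Ioc]
    have hinter : Ioi (0:ℝ) ∩ Ioc 0 1 = Ioc (0:ℝ) 1 := by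
      ext x; simp only [Set.mem_inter_iff, Set.mem_Ioi, Set.mem_Ioc]
      exact ⟨fun h => h.2, fun h => ⟨h.1, h⟩⟩
    rw [hinter]
    -- compute the integral
    have hval : (∫ r in Ioc (0:ℝ) 1, (1/π) * ((1 - 2*p*r^2) * r * Real.exp (-p*r^2)))
        = (1/π) * (((2*p+1) * Real.exp (-p) - 1) / (2*p)) := by
      rw [← intervalIntegral.integral_of_le (by norm_num : (0:ℝ) ≤ 1)]
      rw [intervalIntegral.integral_const_mul]
      have key : ∀ r : ℝ, HasDerivAt (fun r : ℝ => (1/(2*p) + r^2) * Real.exp (-p*r^2))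
          ((1 - 2*p*r^2) * r * Real.exp (-p*r^2)) r := by
        intro r
        have h1 : HasDerivAt (fun r : ℝ => 1/(2*p) + r^2) (2*r) r := by
          simpa using ((hasDerivAt_pow 2 r).const_add (1/(2*p)))
        have h2 : HasDerivAt (fun r : ℝ => -p*r^2) (-p*(2*r)) r := by
          simpa using ((hasDerivAt_pow 2 r).const_mul (-p))
        have h3 := h2.exp
        have := h1.mul h3
        refine this.congr_deriv ?_
        field_simp
        ring
      rw [intervalIntegral.integral_eq_sub_of_hasDerivAt (fun r _ => key r)
          (by apply Continuous.intervalIntegrable; continuity)]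
      simp only [one_pow, mul_one, neg_mul]
      field_simp
      simp only [ne_eq, OfNat.ofNat_ne_zero, not_false_eq_true, zero_pow, mul_zero, add_zero, neg_zero, Real.exp_zero, mul_one]
      ring
    rw [hval, root_iff p hp]
    have hexp : (0:ℝ) < Real.exp (-p) := Real.exp_pos _
    constructor
    · intro h
      have h2 : ((2*p+1) * Real.exp (-p) - 1) / (2*p) = 0 := by
        rcases mul_eq_zero.mp h with h' | h'
        · exact absurd h' (by positivity)
        · exact h'
      have h3 : (2*p+1) * Real.exp (-p) = 1 := by
        field_simp at h2
        linarith
      have h4 : Real.exp p * ((2*p+1) * Real.exp (-p)) = Real.exp p * 1 := by rw [h3]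
      rw [show Real.exp p * ((2*p+1) * Real.exp (-p)) =
            (2*p+1) * (Real.exp p * Real.exp (-p)) by ring,
          ← Real.exp_add] at h4
      simp at h4
      linarith
    · intro h
      have h3 : (2*p+1) * Real.exp (-p) = 1 := by
        rw [← h, ← Real.exp_add]
        simp
      rw [h3]
      simp
  · -- Part 2: existence and uniqueness
    -- existence via IVT
    have hcont : ContinuousOn (fun x : ℝ => Real.exp x - (2*x+1)) (Icc 1 2) := by
      fun_prop
    have hg1 : Real.exp 1 - (2*1+1) ≤ 0 := by
      have := Real.exp_one_lt_d9
      norm_num at this ⊢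
      linarith
    have hg2 : (0:ℝ) ≤ Real.exp 2 - (2*2+1) := by
      have h := Real.exp_one_gt_d9
      have h2 : Real.exp 2 = Real.exp 1 * Real.exp 1 := by
        rw [← Real.exp_add]; norm_num
      nlinarith [Real.exp_pos 1]
    have hsub := intermediate_value_Icc (by norm_num : (1:ℝ) ≤ 2) hcont
    have h0 : (0:ℝ) ∈ Icc (Real.exp 1 - (2*1+1)) (Real.exp 2 - (2*2+1)) := ⟨hg1, hg2⟩
    obtain ⟨c, hc, hc0⟩ := hsub h0
    have hcpos : 0 < c := lt_of_lt_of_le one_pos hc.1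
    have hcroot : Real.exp c = 2 * c + 1 := by
      have : Real.exp c - (2*c+1) = 0 := hc0
      linarith
    refine ⟨c, ⟨hcpos, (root_iff c hcpos).mpr hcroot⟩, ?_⟩
    -- uniqueness via strict convexity of exp (0, p, q would be 3 collinear points)
    have uniq : ∀ p q : ℝ, 0 < p → Real.exp p = 2*p+1 → 0 < q → Real.exp q = 2*q+1 →
        p ≤ q → p = q := by
      intro p q hp hep hq heq hpq
      by_contra hne
      have hlt : p < q := lt_of_le_of_ne hpq hne
      have ht : 0 < p / q := div_pos hp hq
      have ht' : 0 < 1 - p / q := by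
        have : p / q < 1 := (div_lt_one hq).mpr hlt
        linarith
      have h := strictConvexOn_exp.2 (Set.mem_univ (0:ℝ)) (Set.mem_univ q)
        (by intro h; exact absurd h.symm (ne_of_gt hq)) ht' ht (by ring)
      simp only [smul_eq_mul, mul_zero, zero_add, Real.exp_zero, mul_one] at h
      have hx : p / q * q = p := by field_simp
      rw [hx] at h
      rw [hep, heq] at h
      have : (1 - p/q) + p/q * (2*q+1) = 2*p+1 := by field_simp; ring
      nlinarith
    intro q hq
    obtain ⟨hq0, hqe⟩ := hq
    have hqroot := (root_iff q hq0).mp hqe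
    rcases le_total q c with h | h
    · exact uniq q c hq0 hqroot hcpos hcroot h
    · exact (uniq c q hcpos hcroot hq0 hqroot h).symm
  · -- Part 3: numerical localization
    intro p hp hpe
    have hroot := (root_iff p hp).mp hpe
    have hA : Real.exp 1.2564302 < 2 * 1.2564302 + 1 := by
      have := exp_lt_A; norm_num at this ⊢; linarith
    have hB : 2 * 1.2564322 + 1 < Real.exp 1.2564322 := by
      have := exp_gt_B; norm_num at this ⊢; linarith
    have hlow : (1.2564302:ℝ) < p := by
      by_contra hle
      push_neg at hle
      have key := exp_convex_aux p 1.2564302 hp.le hle (by norm_num)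
      have ht : 0 < p / (1.2564302:ℝ) := by positivity
      have : Real.exp p < (1 - p/1.2564302) + (p/1.2564302) * (2*1.2564302+1) := by
        nlinarith
      rw [hroot] at this
      have heq : (1 - p/(1.2564302:ℝ)) + (p/1.2564302) * (2*1.2564302+1) = 2*p+1 := by
        field_simp; ring
      linarith [heq ▸ this]
    have hhigh : p < 1.2564322 := by
      by_contra hle
      push_neg at hle
      have key := exp_convex_aux 1.2564322 p (by norm_num) hle hp
      have : Real.exp 1.2564322 ≤ (1 - 1.2564322/p) + (1.2564322/p) * (2*p+1) := by
        rw [hroot] at key; exact key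
      have heq : (1 - (1.2564322:ℝ)/p) + (1.2564322/p) * (2*p+1) = 2*1.2564322+1 := by
        field_simp; ring
      linarith [heq ▸ this]
    rw [abs_lt]
    constructor <;> norm_num at hlow hhigh ⊢ <;> linarith
end

section
/- Let f : [0,∞) → ℝ be nonnegative, bounded, and compactly supported, and let c_{2n} = 2π ∫₀^∞ f(r) r^{2n+1} dr and c_{2n}(p) = 2π ∫₀^∞ f(r) r^{2n+1} e^{−p r²} dr for p ≥ 0. Then the convolution of f (viewed as a circularly symmetric function on ℝ²) with the normalized gaussian kernel (p/π) e^{−p|x|²} equals f_c(r) = (p/π) e^{−p r²} Σ_{n=0}^∞ [c_{2n}(p) p^{2n} / (n!)²] r^{2n}, where the series converges absolutely for all r ≥ 0. -/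
open MeasureTheory Set Real

lemma cosW_odd (n : ℕ) : (∫ x in (-π)..π, Real.cos x ^ (2*n+1)) = 0 := by
  induction n with
  | zero => simp [integral_cos]
  | succ k ih =>
    have h := integral_cos_pow (a := -π) (b := π) (n := 2*k+1)
    have h2 : 2*(k+1)+1 = (2*k+1) + 2 := by ring
    rw [h2, h, ih]; simp [Real.sin_pi]

lemma cosW_even (n : ℕ) : (∫ x in (-π)..π, Real.cos x ^ (2*n)) =
    2 * π * (2*n).factorial / (4 ^ n * ((n.factorial : ℝ)) ^ 2) := by
  induction n with
  | zero => simp; ring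
  | succ k ih =>
    have h := integral_cos_pow (a := -π) (b := π) (n := 2*k)
    have h2 : 2*(k+1) = (2*k) + 2 := by ring
    rw [h2, h, ih]
    simp only [Real.sin_pi, Real.sin_neg, mul_zero, zero_mul, neg_zero, sub_zero, zero_div,
      zero_add, mul_zero]
    have hfac : ((2*k+2).factorial : ℝ) = (2*k+2) * ((2*k+1) * (2*k).factorial) := by
      push_cast [Nat.factorial_succ]; ring
    rw [hfac, Nat.factorial_succ]
    have hk4 : ((4:ℝ)^k) ≠ 0 := by positivity
    have hkf : ((k.factorial : ℝ)) ≠ 0 := Nat.cast_ne_zero.mpr k.factorial_ne_zero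
    push_cast
    field_simp
    ring

theorem convolved_profile_series
    (f : ℝ → ℝ) (F R₀ p : ℝ) (hp : 0 < p) (hR₀ : 0 < R₀)
    (hmeas : Measurable f)
    (hpos : ∀ r : ℝ, 0 ≤ r → 0 ≤ f r)
    (hbd : ∀ r : ℝ, 0 ≤ r → f r ≤ F)
    (hsupp : ∀ r : ℝ, R₀ < r → f r = 0)
    (c : ℕ → ℝ)
    (hc : ∀ n : ℕ, c n =
      2 * π * ∫ r in Ioi (0:ℝ), f r * r ^ (2 * n + 1) * Real.exp (-p * r ^ 2)) :
    ∀ x : EuclideanSpace ℝ (Fin 2),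
      Summable (fun n : ℕ =>
        |c n * p ^ (2 * n) / ((n.factorial : ℝ)) ^ 2 * ‖x‖ ^ (2 * n)|) ∧
      (∫ y : EuclideanSpace ℝ (Fin 2),
          f ‖y‖ * (p / π * Real.exp (-p * ‖x - y‖ ^ 2))) =
        p / π * Real.exp (-p * ‖x‖ ^ 2) *
          ∑' n : ℕ, c n * p ^ (2 * n) / ((n.factorial : ℝ)) ^ 2 * ‖x‖ ^ (2 * n) := by
  intro x
  set s : ℝ := ‖x‖ with hs_def
  have hs : 0 ≤ s := norm_nonneg x
  have hF : 0 ≤ F := le_trans (hpos 0 le_rfl) (hbd 0 le_rfl)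
  -- the radial moments
  set J : ℕ → ℝ := fun k => ∫ r in Ioi (0:ℝ), f r * r ^ (k+1) * Real.exp (-p * r^2) with hJ_def
  have hcJ : ∀ n, c n = 2 * π * J (2*n) := by
    intro n; rw [hc n]
  -- integrand and bound
  set g : ℕ → ℝ → ℝ := fun k r => f r * r ^ (k+1) * Real.exp (-p * r^2) with hg_def
  have hgmeas : ∀ k, Measurable (g k) := by
    intro k
    exact (hmeas.mul (measurable_id.pow_const _)).mul
      ((measurable_id.pow_const 2).const_mul (-p)).exp
  have hgbd : ∀ k, ∀ r ∈ Ioi (0:ℝ), g k r ≤ (Ioc (0:ℝ) R₀).indicator (fun _ => F * R₀^(k+1)) r ∧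
      0 ≤ g k r := by
    intro k r hr
    have hr0 : (0:ℝ) < r := hr
    constructor
    · by_cases hrR : r ≤ R₀
      · rw [indicator_of_mem (by exact ⟨hr0, hrR⟩)]
        have h1 : f r ≤ F := hbd r hr0.le
        have h2 : r ^ (k+1) ≤ R₀^(k+1) := pow_le_pow_left₀ hr0.le hrR _
        have h3 : Real.exp (-p*r^2) ≤ 1 := by
          rw [Real.exp_le_one_iff]; nlinarith
        calc f r * r^(k+1) * Real.exp (-p*r^2) ≤ f r * r^(k+1) * 1 := by
              have hfr := hpos r hr0.le
              apply mul_le_mul_of_nonneg_left h3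
              positivity
          _ = f r * r^(k+1) := mul_one _
          _ ≤ F * R₀^(k+1) := by
              apply mul_le_mul h1 h2 (by positivity) hF
      · push_neg at hrR
        show f r * r ^ (k+1) * Real.exp (-p * r^2) ≤ _
        rw [hsupp r hrR, indicator_apply]
        simp only [zero_mul]
        split <;> positivity
    · have := hpos r hr0.le; positivity
  have hgint : ∀ k, IntegrableOn (g k) (Ioi (0:ℝ)) := by
    intro k
    have hind : Integrable ((Ioc (0:ℝ) R₀).indicator (fun _ => F * R₀^(k+1))) := by
      rw [integrable_indicator_iff measurableSet_Ioc]
      exact (integrableOn_const_iff).mpr (Or.inr (by simp [hR₀]))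
    refine Integrable.mono' hind.restrict (hgmeas k).aestronglyMeasurable ?_
    rw [ae_restrict_iff' measurableSet_Ioi]
    filter_upwards with r hr
    rw [Real.norm_eq_abs, abs_of_nonneg (hgbd k r hr).2]
    exact (hgbd k r hr).1
  have hJ0 : ∀ k, 0 ≤ J k := by
    intro k
    exact setIntegral_nonneg measurableSet_Ioi fun r hr => (hgbd k r hr).2
  have hJle : ∀ k, J k ≤ F * R₀^(k+2) := by
    intro k
    have hind : Integrable ((Ioc (0:ℝ) R₀).indicator (fun _ => F * R₀^(k+1))) := by
      rw [integrable_indicator_iff measurableSet_Ioc]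
      exact (integrableOn_const_iff).mpr (Or.inr (by simp [hR₀]))
    have := setIntegral_mono_on (hgint k) hind.integrableOn measurableSet_Ioi
      (fun r hr => (hgbd k r hr).1)
    refine this.trans ?_
    rw [setIntegral_indicator measurableSet_Ioc]
    have hinter : Ioi (0:ℝ) ∩ Ioc 0 R₀ = Ioc 0 R₀ := by
      ext r; simp only [mem_inter_iff, mem_Ioi, mem_Ioc]; tauto
    rw [hinter, setIntegral_const, Real.volume_real_Ioc, smul_eq_mul,
      max_eq_left (by linarith)]
    have : R₀ ^ (k+2) = R₀ * R₀^(k+1) := by ring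
    rw [this]; ring_nf; rfl
  -- Part 1: summability
  have hSum : Summable (fun n : ℕ =>
      |c n * p ^ (2 * n) / ((n.factorial : ℝ)) ^ 2 * s ^ (2 * n)|) := by
    refine Summable.of_nonneg_of_le (fun n => abs_nonneg _) ?_
      (((Real.summable_pow_div_factorial ((p*R₀*s)^2)).mul_left (2*π*F*R₀^2)))
    intro n
    have hc0 : 0 ≤ c n := by
      rw [hcJ n]; exact mul_nonneg (by positivity) (hJ0 _)
    have hnn : 0 ≤ c n * p ^ (2*n) / ((n.factorial:ℝ))^2 * s^(2*n) := by
      apply mul_nonneg (div_nonneg (mul_nonneg hc0 (by positivity)) (by positivity)) (by positivity)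
    have h1 : c n ≤ 2*π*F*R₀^(2*n+2) := by
      rw [hcJ n]
      calc 2*π*J (2*n) ≤ 2*π*(F * R₀^(2*n+2)) := by
            apply mul_le_mul_of_nonneg_left (hJle (2*n)) (by positivity)
        _ = 2*π*F*R₀^(2*n+2) := by ring
    have hfac1 : (1:ℝ) ≤ (n.factorial:ℝ) := by exact_mod_cast n.factorial_pos
    have hfpos : (0:ℝ) < (n.factorial:ℝ) := by positivity
    have hfacsq : (n.factorial:ℝ) ≤ ((n.factorial:ℝ))^2 := by nlinarith
    have hpow : ((p*R₀*s)^2)^n = p^(2*n) * R₀^(2*n) * s^(2*n) := by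
      rw [← pow_mul]
      rw [show (p*R₀*s)^(2*n) = p^(2*n) * R₀^(2*n) * s^(2*n) by rw [mul_pow, mul_pow]]
    calc |c n * p ^ (2*n) / ((n.factorial:ℝ))^2 * s^(2*n)|
        = c n * (p^(2*n) * s^(2*n)) / ((n.factorial:ℝ))^2 := by
          rw [abs_of_nonneg hnn]; ring
      _ ≤ (2*π*F*R₀^(2*n+2)) * (p^(2*n) * s^(2*n)) / ((n.factorial:ℝ))^2 := by
          gcongr
      _ = (2*π*F*R₀^2) * (((p*R₀*s)^2)^n / ((n.factorial:ℝ))^2) := by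
          rw [hpow, pow_add]; ring
      _ ≤ (2*π*F*R₀^2) * (((p*R₀*s)^2)^n / (n.factorial:ℝ)) := by
          gcongr
  refine ⟨hSum, ?_⟩
  -- transfer to ℂ
  set φ : ℂ ≃ₗᵢ[ℝ] EuclideanSpace ℝ (Fin 2) := Complex.orthonormalBasisOneI.repr with hφ
  set w : ℂ := φ.symm x with hw
  have hwprofessional : ‖w‖ = s := by rw [hw, hs_def]; exact φ.symm.norm_map x
  set H : ℂ → ℝ := fun z => f ‖z‖ * (p / π * Real.exp (-p * ‖w - z‖ ^ 2)) with hH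
  have e1 : (∫ y : EuclideanSpace ℝ (Fin 2),
      f ‖y‖ * (p / π * Real.exp (-p * ‖x - y‖ ^ 2))) = ∫ z : ℂ, H z := by
    rw [← φ.measurePreserving.integral_comp φ.toHomeomorph.measurableEmbedding]
    apply integral_congr_ae
    filter_upwards with z
    have h1 : ‖φ z‖ = ‖z‖ := φ.norm_map z
    have h2 : ‖x - φ z‖ = ‖w - z‖ := by
      conv_lhs => rw [show x = φ w by rw [hw, LinearIsometryEquiv.apply_symm_apply]]
      rw [← map_sub, φ.norm_map]
    rw [h1, h2]
  -- rotation
  set u : ℂ := if w = 0 then 1 else w / (s:ℂ) with hu_def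
  have hu : ‖u‖ = 1 := by
    rw [hu_def]
    split
    · simp
    · rename_i hw0
      have hs0 : s ≠ 0 := by
        intro h; apply hw0
        rw [← norm_eq_zero, hwprofessional, h]
      rw [norm_div, hwprofessional, Complex.norm_real, Real.norm_eq_abs, abs_of_nonneg hs]
      field_simp
  have huw : u * (s:ℂ) = w := by
    rw [hu_def]
    split
    · rename_i hw0
      have : s = 0 := by rw [← hwprofessional, hw0, norm_zero]
      rw [this, hw0]; simp
    · rename_i hw0
      have hs0 : s ≠ 0 := by
        intro h; apply hw0
        rw [← norm_eq_zero, hwprofessional, h]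
      have hs0' : (s:ℂ) ≠ 0 := by exact_mod_cast hs0
      field_simp
  set U : Circle := ⟨u, mem_sphere_zero_iff_norm.mpr hu⟩ with hU
  set H' : ℂ → ℝ := fun z => f ‖z‖ * (p / π * Real.exp (-p * ‖(s:ℂ) - z‖ ^ 2)) with hH'
  have e2 : (∫ z : ℂ, H z) = ∫ z : ℂ, H' z := by
    rw [← (rotation U).measurePreserving.integral_comp
      (rotation U).toHomeomorph.measurableEmbedding H]
    apply integral_congr_ae
    filter_upwards with z
    have h1 : ‖rotation U z‖ = ‖z‖ := (rotation U).norm_map z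
    have h2 : ‖w - rotation U z‖ = ‖(s:ℂ) - z‖ := by
      rw [rotation_apply]
      have hUu : (U:ℂ) = u := rfl
      have h3 : w - (U:ℂ) * z = (U:ℂ) * ((s:ℂ) - z) := by
        rw [hUu, mul_sub, huw]
      rw [h3, norm_mul, hUu, hu, one_mul]
    show H (rotation U z) = H' z
    rw [hH, hH']
    simp only
    rw [h1, h2]
  -- polar coordinates
  set A : ℝ := p / π * Real.exp (-p * s^2) with hA_def
  have hA0 : 0 < A := by rw [hA_def]; positivity
  set T : Set (ℝ×ℝ) := polarCoord.target with hT_def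
  have hT : T = Ioi (0:ℝ) ×ˢ Ioo (-π) π := rfl
  set K : ℝ×ℝ → ℝ := fun q =>
    q.1 * (f q.1 * (p/π * Real.exp (-p*(s^2 + q.1^2 - 2*s*q.1*Real.cos q.2)))) with hK_def
  set h : ℕ → ℝ×ℝ → ℝ := fun k q =>
    (A * ((2*p*s)^k / k.factorial) * g k q.1) * Real.cos q.2 ^ k with hh_def
  have e3 : (∫ z : ℂ, H' z) = ∫ q in T, q.1 • H' (Complex.polarCoord.symm q) :=
    (Complex.integral_comp_polarCoord_symm H').symm
  have e4 : (∫ q in T, q.1 • H' (Complex.polarCoord.symm q)) = ∫ q in T, K q := by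
    apply setIntegral_congr_fun (polarCoord.open_target.measurableSet)
    intro q hq
    have hq' : q ∈ Ioi (0:ℝ) ×ˢ Ioo (-π) π := hq
    have hq1 : 0 < q.1 := hq'.1
    have habsq : ‖Complex.polarCoord.symm q‖ = q.1 := by
      rw [Complex.norm_polarCoord_symm, abs_of_pos hq1]
    have hnq : ‖(s:ℂ) - Complex.polarCoord.symm q‖^2 = s^2 + q.1^2 - 2*s*q.1*Real.cos q.2 := by
      rw [Complex.polarCoord_symm_apply]
      rw [Complex.sq_norm, Complex.normSq_apply]
      simp only [Complex.sub_re, Complex.sub_im, Complex.ofReal_re, Complex.ofReal_im,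
        Complex.mul_re, Complex.mul_im, Complex.add_re, Complex.add_im, Complex.I_re,
        Complex.I_im, Complex.mul_im]
      ring_nf
      nlinarith [Real.sin_sq_add_cos_sq q.2]
    show q.1 • H' (Complex.polarCoord.symm q) = K q
    rw [hH', hK_def]
    simp only [smul_eq_mul]
    rw [habsq, hnq]
  have hKsum : ∀ q : ℝ×ℝ, K q = ∑' k, h k q := by
    intro q
    obtain ⟨r, θ⟩ := q
    have hexp : Real.exp (2*p*s*r*Real.cos θ)
        = ∑' k : ℕ, (2*p*s*r*Real.cos θ)^k / k.factorial := by
      rw [Real.exp_eq_exp_ℝ, NormedSpace.exp_eq_tsum_div]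
    have hsplit : Real.exp (-p*(s^2 + r^2 - 2*s*r*Real.cos θ)) =
        Real.exp (-p*s^2) * Real.exp (-p*r^2) * Real.exp (2*p*s*r*Real.cos θ) := by
      rw [← Real.exp_add, ← Real.exp_add]; ring_nf
    show r * (f r * (p/π * Real.exp (-p*(s^2 + r^2 - 2*s*r*Real.cos θ)))) = _
    rw [hsplit, hexp]
    rw [show r * (f r * (p/π * (Real.exp (-p*s^2) * Real.exp (-p*r^2) *
        ∑' k : ℕ, (2*p*s*r*Real.cos θ)^k / k.factorial)))
      = (r * f r * (p/π) * Real.exp (-p*s^2) * Real.exp (-p*r^2)) *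
        ∑' k : ℕ, (2*p*s*r*Real.cos θ)^k / k.factorial from by ring]
    rw [← tsum_mul_left]
    congr 1
    funext k
    show _ = (A * ((2*p*s)^k / k.factorial) * g k r) * Real.cos θ ^ k
    rw [hA_def, hg_def]
    simp only
    rw [mul_pow (2*p*s*r) (Real.cos θ) k, mul_pow (2*p*s) r k]
    ring
  have hmeash : ∀ k, AEStronglyMeasurable (h k) (volume.restrict T) := by
    intro k
    apply Measurable.aestronglyMeasurable
    exact ((measurable_const.mul ((hgmeas k).comp measurable_fst)).mul
      ((Real.measurable_cos.comp measurable_snd).pow_const k))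
  set D : Set (ℝ×ℝ) := Ioc 0 R₀ ×ˢ Ioo (-π) π with hD_def
  have hDmeas : MeasurableSet D := measurableSet_Ioc.prod measurableSet_Ioo
  set B : ℕ → ℝ := fun k => A * ((2*p*s)^k / k.factorial) * (F * R₀^(k+1)) with hB_def
  have hB0 : ∀ k, 0 ≤ B k := by
    intro k
    apply mul_nonneg (mul_nonneg hA0.le (by positivity)) (by positivity)
  have hhle : ∀ k, ∀ q ∈ T, |h k q| ≤ D.indicator (fun _ => B k) q := by
    intro k q hq
    have hq1 : 0 < q.1 := (hT ▸ hq).1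
    have hq2 : q.2 ∈ Ioo (-π) π := (hT ▸ hq).2
    have hg0 := (hgbd k q.1 hq1).2
    have hgle := (hgbd k q.1 hq1).1
    have hcos : |Real.cos q.2 ^ k| ≤ 1 := by
      rw [abs_pow]; exact pow_le_one₀ (abs_nonneg _) (Real.abs_cos_le_one _)
    have hc1 : (0:ℝ) ≤ A * ((2*p*s)^k / k.factorial) := mul_nonneg hA0.le (by positivity)
    calc |h k q| = A * ((2*p*s)^k / k.factorial) * g k q.1 * |Real.cos q.2 ^ k| := by
          rw [hh_def]; simp only
          rw [abs_mul, abs_of_nonneg (mul_nonneg hc1 hg0)]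
      _ ≤ A * ((2*p*s)^k / k.factorial) * g k q.1 := by
          apply mul_le_of_le_one_right (mul_nonneg hc1 hg0) hcos
      _ ≤ A * ((2*p*s)^k / k.factorial) *
            ((Ioc 0 R₀).indicator (fun _ => F * R₀^(k+1)) q.1) := by
          exact mul_le_mul_of_nonneg_left hgle hc1
      _ = D.indicator (fun _ => B k) q := by
          rw [hB_def]
          by_cases hmem : q.1 ∈ Ioc 0 R₀
          · rw [indicator_of_mem hmem, indicator_of_mem (show q ∈ D from ⟨hmem, hq2⟩)]
          · rw [indicator_of_notMem hmem,
              indicator_of_notMem (fun hD => hmem hD.1), mul_zero]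
  have hlintle : ∀ k, (∫⁻ q in T, ‖h k q‖₊) ≤ ENNReal.ofReal (B k * (R₀ * (2*π))) := by
    intro k
    calc ∫⁻ q in T, ‖h k q‖₊
        ≤ ∫⁻ q in T, ENNReal.ofReal (D.indicator (fun _ => B k) q) := by
          apply setLIntegral_mono ((measurable_const.indicator hDmeas).ennreal_ofReal)
          intro q hq
          rw [← enorm_eq_nnnorm, ← ofReal_norm, Real.norm_eq_abs]
          exact ENNReal.ofReal_le_ofReal (hhle k q hq)
      _ ≤ ∫⁻ q, ENNReal.ofReal (D.indicator (fun _ => B k) q) :=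
          setLIntegral_le_lintegral _ _
      _ = ENNReal.ofReal (B k) * volume D := by
          have hind : ∀ q, ENNReal.ofReal (D.indicator (fun _ => B k) q)
              = D.indicator (fun _ => ENNReal.ofReal (B k)) q := by
            intro q; by_cases hq : q ∈ D <;> simp [hq]
          simp_rw [hind]
          rw [lintegral_indicator hDmeas, setLIntegral_const]
      _ = ENNReal.ofReal (B k * (R₀ * (2*π))) := by
          rw [hD_def, Measure.volume_eq_prod, Measure.prod_prod, Real.volume_Ioc,
            Real.volume_Ioo]
          rw [← ENNReal.ofReal_mul (by linarith), ← ENNReal.ofReal_mul (hB0 k)]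
          congr 1
          ring
  have hsum_lint : (∑' k, ∫⁻ q in T, ‖h k q‖₊) ≠ ⊤ := by
    have hBsum : Summable (fun k => B k * (R₀ * (2*π))) := by
      have hBe : ∀ k, B k * (R₀*(2*π)) =
          (A * F * R₀ * (R₀*(2*π))) * ((2*p*s*R₀)^k / k.factorial) := by
        intro k
        rw [hB_def]
        simp only
        rw [mul_pow (2*p*s) R₀ k, pow_succ]
        ring
      rw [funext hBe]
      exact (Real.summable_pow_div_factorial (2*p*s*R₀)).mul_left _
    apply ne_of_lt
    calc (∑' k, ∫⁻ q in T, ‖h k q‖₊)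
        ≤ ∑' k, ENNReal.ofReal (B k * (R₀ * (2*π))) := ENNReal.tsum_le_tsum hlintle
      _ = ENNReal.ofReal (∑' k, B k * (R₀ * (2*π))) := by
          rw [ENNReal.ofReal_tsum_of_nonneg
            (fun k => mul_nonneg (hB0 k) (by positivity)) hBsum]
      _ < ⊤ := ENNReal.ofReal_lt_top
  have e5 : (∫ q in T, K q) = ∑' k, ∫ q in T, h k q := by
    rw [show K = fun q => ∑' k, h k q from funext hKsum]
    exact integral_tsum hmeash hsum_lint
  have e6 : ∀ k, (∫ q in T, h k q)
      = A * ((2*p*s)^k / k.factorial) * J k * (∫ θ in (-π)..π, Real.cos θ ^ k) := by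
    intro k
    have : (∫ q in T, h k q) = ∫ q in Ioi (0:ℝ) ×ˢ Ioo (-π) π,
        (fun r => A * ((2*p*s)^k / k.factorial) * g k r) q.1 * (fun θ => Real.cos θ ^ k) q.2 := by
      rw [← hT]
    rw [this, Measure.volume_eq_prod,
      setIntegral_prod_mul (fun r => A * ((2*p*s)^k / (k.factorial:ℝ)) * g k r)
        (fun θ => Real.cos θ ^ k) (Ioi (0:ℝ)) (Ioo (-π) π),
      MeasureTheory.integral_const_mul,
      intervalIntegral.integral_of_le (by linarith [Real.pi_pos]),
      integral_Ioc_eq_integral_Ioo]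
  -- evaluate the series
  have hts : Summable (fun n => c n * p^(2*n)/((n.factorial:ℝ))^2 * s^(2*n)) :=
    Summable.of_abs hSum
  set S : ℝ := ∑' n : ℕ, c n * p^(2*n)/((n.factorial:ℝ))^2 * s^(2*n) with hS_def
  set v : ℕ → ℝ := fun k =>
    A * ((2*p*s)^k / k.factorial) * J k * (∫ θ in (-π)..π, Real.cos θ ^ k) with hv_def
  have hveven : ∀ n, v (2*n) = A * (c n * p^(2*n)/((n.factorial:ℝ))^2 * s^(2*n)) := by
    intro n
    rw [hv_def]
    simp only
    rw [cosW_even n, hcJ n]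
    have hp2 : (2*p*s)^(2*n) = 4^n * p^(2*n) * s^(2*n) := by
      rw [pow_mul, show (2*p*s)^2 = 4*p^2*s^2 from by ring, mul_pow, mul_pow,
        ← pow_mul, ← pow_mul]
    rw [hp2]
    have h1 : ((2*n).factorial:ℝ) ≠ 0 := Nat.cast_ne_zero.mpr (2*n).factorial_ne_zero
    have h2 : ((n.factorial:ℝ)) ≠ 0 := Nat.cast_ne_zero.mpr n.factorial_ne_zero
    have h3 : ((4:ℝ)^n) ≠ 0 := by positivity
    field_simp
  have hvodd : ∀ n, v (2*n+1) = 0 := by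
    intro n
    rw [hv_def]
    simp only
    rw [cosW_odd n, mul_zero]
  have heven : HasSum (fun n => v (2*n)) (A * S) := by
    rw [funext hveven]
    exact (hts.hasSum).mul_left A
  have hodd : HasSum (fun n => v (2*n+1)) 0 := by
    rw [funext hvodd]
    exact hasSum_zero
  have htot : HasSum v (A * S + 0) := heven.even_add_odd hodd
  rw [e1, e2, e3, e4, e5]
  rw [show (fun k => ∫ q in T, h k q) = v from funext e6]
  rw [htot.tsum_eq, add_zero, hA_def]
end

section
/- Under the hypotheses that f is nonnegative, bounded, and its moments satisfy c_n^{1/n} = o(n^{1/2}), the generalized moments satisfy c_n(p) = Σ_{k=0}^∞ (−1)^k (p^k / k!) c_{n+2k}, with the series absolutely convergent for all p ∈ [0,∞). -/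
open MeasureTheory Set Real Filter Asymptotics

lemma pow_div_fac_le_exp {x : ℝ} (hx : 0 ≤ x) (k : ℕ) : x ^ k / k.factorial ≤ Real.exp x := by
  refine le_trans ?_ (Real.sum_le_exp_of_nonneg hx (k+1))
  refine Finset.single_le_sum (f := fun i => x ^ i / i.factorial) (fun i _ => by positivity) ?_
  simp

lemma summable_aux (c : ℕ → ℝ) (hcnn : ∀ m : ℕ, 0 ≤ c m)
    (hlittleo : (fun n : ℕ => (c n) ^ ((n : ℝ)⁻¹)) =o[atTop]
      (fun n : ℕ => (n : ℝ) ^ ((1:ℝ)/2)))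
    (p : ℝ) (hp : 0 ≤ p) (n : ℕ) :
    Summable (fun k : ℕ => p ^ k / (k.factorial : ℝ) * c (n + 2 * k)) := by
  set ε : ℝ := (Real.exp 1 * Real.sqrt (2*p+2))⁻¹ with hεdef
  have hs0 : (0:ℝ) < Real.sqrt (2*p+2) := Real.sqrt_pos.mpr (by linarith)
  have hε0 : 0 < ε := by positivity
  set q : ℝ := ε^2 * Real.exp 1 ^ 2 * p with hqdef
  have hq0 : 0 ≤ q := by positivity
  have hq1 : q < 1 := by
    have hsq : Real.sqrt (2*p+2) ^ 2 = 2*p+2 := Real.sq_sqrt (by linarith)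
    have : q = p / (2*p+2) := by
      rw [hqdef, hεdef, mul_inv, mul_pow, inv_pow, inv_pow, hsq]
      have h1 : Real.exp 1 ≠ 0 := (Real.exp_pos 1).ne'
      field_simp
    rw [this, div_lt_one (by linarith)]; linarith
  obtain ⟨N, hN⟩ := eventually_atTop.mp (hlittleo.def hε0)
  set D2 : ℝ := ε^n * Real.exp n * ((n+2)*2:ℝ)^n with hD2
  have hqnorm : ‖q‖ < 1 := by rwa [Real.norm_eq_abs, abs_of_nonneg hq0]
  refine Summable.of_norm_bounded_eventually_nat
    (g := fun k => D2 * ((k:ℝ)^n * q^k))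
    ((summable_pow_mul_geometric_of_norm_lt_one n hqnorm).mul_left D2) ?_
  filter_upwards [eventually_ge_atTop (N + n + 1)] with k hk
  have hk1 : 1 ≤ k := le_trans (by omega) hk
  set m : ℕ := n + 2 * k with hm
  have hmN : N ≤ m := by omega
  have hm1 : (1:ℝ) ≤ (m:ℝ) := by exact_mod_cast Nat.one_le_iff_ne_zero.mpr (by omega)
  have hm0 : (0:ℝ) ≤ (m:ℝ) := by linarith
  -- bound on c m
  have hb1 : c m ≤ (ε * Real.sqrt m) ^ m := by
    have h := hN m hmN
    rw [Real.norm_eq_abs, Real.norm_eq_abs, abs_of_nonneg (Real.rpow_nonneg (hcnn m) _),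
      abs_of_nonneg (Real.rpow_nonneg hm0 _)] at h
    have hcm : c m = (c m ^ ((m:ℝ)⁻¹)) ^ m := by
      rw [← Real.rpow_natCast (c m ^ ((m:ℝ)⁻¹)) m, ← Real.rpow_mul (hcnn m),
        inv_mul_cancel₀ (by positivity : (m:ℝ) ≠ 0), Real.rpow_one]
    rw [hcm]
    have hsqrt : (m:ℝ) ^ ((1:ℝ)/2) = Real.sqrt m := by
      rw [Real.sqrt_eq_rpow]
    refine pow_le_pow_left₀ (Real.rpow_nonneg (hcnn m) _) ?_ m
    rw [← hsqrt]; exact h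
  have hsq : (Real.sqrt m) ^ (2*k) = (m:ℝ)^k := by
    rw [pow_mul, Real.sq_sqrt hm0]
  have hexp : Real.exp (m:ℝ) = Real.exp n * (Real.exp 1 ^ 2)^k := by
    rw [hm]; push_cast
    rw [Real.exp_add, ← Real.exp_nat_mul, ← Real.exp_nat_mul]
    norm_num [mul_comm]
  have hkk : (1:ℝ) ≤ (k:ℝ) := by exact_mod_cast hk1
  have hsm : Real.sqrt m ≤ ((n:ℝ)+2)*(2*k) := by
    have h1 : Real.sqrt m ≤ (m:ℝ) := by
      refine Real.sqrt_le_iff.mpr ⟨hm0, ?_⟩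
      nlinarith [hm1]
    refine h1.trans ?_
    have : (m:ℝ) = (n:ℝ) + 2*k := by rw [hm]; push_cast; ring
    rw [this]
    nlinarith [Nat.cast_nonneg (α := ℝ) n, hkk]
  have hnn : (0:ℝ) ≤ Real.sqrt m := Real.sqrt_nonneg _
  have key : p ^ k / (k.factorial : ℝ) * c m ≤ D2 * ((k:ℝ)^n * q^k) := by
    calc p ^ k / (k.factorial : ℝ) * c m
        ≤ p ^ k / (k.factorial : ℝ) * (ε * Real.sqrt m) ^ m := by
          gcongr
      _ = ε^n * (Real.sqrt m)^n * ((ε^2*p)^k * ((m:ℝ)^k / (k.factorial:ℝ))) := by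
          rw [hm, mul_pow, pow_add, pow_add, ← hsq]
          ring
      _ ≤ ε^n * (Real.sqrt m)^n * ((ε^2*p)^k * Real.exp (m:ℝ)) := by
          gcongr
          exact pow_div_fac_le_exp hm0 k
      _ = (ε^n * Real.exp n * (Real.sqrt m)^n) * q^k := by
          rw [hexp, hqdef]; ring
      _ ≤ (ε^n * Real.exp n * (((n:ℝ)+2)*(2*k))^n) * q^k := by
          gcongr
      _ = D2 * ((k:ℝ)^n * q^k) := by
          have hre : ((n:ℝ)+2)*(2*(k:ℝ)) = (((n:ℝ)+2)*2)*(k:ℝ) := by ring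
          rw [hre, mul_pow, hD2]; push_cast; ring
  have hnonneg : 0 ≤ p ^ k / (k.factorial : ℝ) * c m := by
    have := hcnn m; positivity
  rw [Real.norm_of_nonneg hnonneg]
  exact key

theorem generalized_moment_series
    (f : ℝ → ℝ) (F : ℝ)
    (hmeas : Measurable f)
    (hpos : ∀ r : ℝ, 0 ≤ r → 0 ≤ f r)
    (hbd : ∀ r : ℝ, 0 ≤ r → f r ≤ F)
    (c : ℕ → ℝ)
    (hc : ∀ n : ℕ, c n = 2 * π * ∫ r in Ioi (0:ℝ), f r * r ^ (n + 1))
    (hInt : ∀ n : ℕ, IntegrableOn (fun r => f r * r ^ (n + 1)) (Ioi (0:ℝ)))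
    (hlittleo : (fun n : ℕ => (c n) ^ ((n : ℝ)⁻¹)) =o[atTop]
      (fun n : ℕ => (n : ℝ) ^ ((1:ℝ)/2))) :
    ∀ p : ℝ, 0 ≤ p → ∀ n : ℕ,
      Summable (fun k : ℕ => |(-1 : ℝ) ^ k * p ^ k / (k.factorial : ℝ) * c (n + 2 * k)|) ∧
      (2 * π * ∫ r in Ioi (0:ℝ), f r * r ^ (n + 1) * Real.exp (-p * r ^ 2)) =
        ∑' k : ℕ, (-1 : ℝ) ^ k * p ^ k / (k.factorial : ℝ) * c (n + 2 * k) := by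
  intro p hp n
  have hcnn : ∀ m : ℕ, 0 ≤ c m := by
    intro m
    rw [hc m]
    have h0 : 0 ≤ ∫ r in Ioi (0:ℝ), f r * r ^ (m + 1) :=
      setIntegral_nonneg measurableSet_Ioi
        (fun r hr => mul_nonneg (hpos r (le_of_lt hr)) (pow_nonneg (le_of_lt hr) _))
    have : (0:ℝ) ≤ 2 * π := by positivity
    exact mul_nonneg this h0
  have hsum := summable_aux c hcnn hlittleo p hp n
  have habs_eq : ∀ k : ℕ, |(-1 : ℝ) ^ k * p ^ k / (k.factorial : ℝ) * c (n + 2 * k)|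
      = p ^ k / (k.factorial : ℝ) * c (n + 2 * k) := by
    intro k
    rw [abs_mul, abs_div, abs_mul, abs_pow, abs_pow, abs_neg, abs_one, one_pow, one_mul,
      abs_of_nonneg hp, abs_of_nonneg (hcnn _), Nat.abs_cast]
  constructor
  · exact hsum.congr (fun k => (habs_eq k).symm)
  · set μ := volume.restrict (Ioi (0:ℝ)) with hμ
    set g : ℕ → ℝ → ℝ := fun k r => ((-p)^k / (k.factorial : ℝ)) * (f r * r^(n + 2*k + 1))
      with hg
    have hgint : ∀ k : ℕ, Integrable (g k) μ := fun k => (hInt (n + 2*k)).const_mul _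
    have hπ : (2 * π) ≠ 0 := by positivity
    have hintc : ∀ k : ℕ, (∫ r in Ioi (0:ℝ), f r * r ^ (n + 2*k + 1))
        = c (n + 2*k) / (2 * π) := by
      intro k
      rw [eq_div_iff hπ, hc (n + 2*k)]; ring
    have hnormint : ∀ k : ℕ, (∫ r, ‖g k r‖ ∂μ)
        = p ^ k / (k.factorial : ℝ) * (c (n + 2*k) / (2 * π)) := by
      intro k
      have heq : ∀ r ∈ Ioi (0:ℝ), ‖g k r‖
          = (p ^ k / (k.factorial : ℝ)) * (f r * r ^ (n + 2*k + 1)) := by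
        intro r hr
        have hfr : 0 ≤ f r * r ^ (n + 2*k + 1) :=
          mul_nonneg (hpos r (le_of_lt hr)) (pow_nonneg (le_of_lt hr) _)
        rw [hg]
        simp only [Real.norm_eq_abs, abs_mul, abs_div, abs_pow, abs_neg,
          abs_of_nonneg hp, Nat.abs_cast, abs_of_nonneg hfr]
      rw [setIntegral_congr_fun measurableSet_Ioi heq, integral_const_mul, hintc k]
    have hsummable_norm : Summable (fun k => ∫ r, ‖g k r‖ ∂μ) := by
      refine ((hsum.div_const (2*π)).congr (fun k => ?_))
      rw [hnormint k]; ring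
    have hkey := integral_tsum_of_summable_integral_norm hgint hsummable_norm
    have hptws : ∀ r : ℝ, (∑' k, g k r) = f r * r^(n+1) * Real.exp (-p * r^2) := by
      intro r
      have hexp : Real.exp (-p*r^2) = ∑' k : ℕ, (-p*r^2)^k / (k.factorial : ℝ) := by
        rw [Real.exp_eq_exp_ℝ, NormedSpace.exp_eq_tsum_div]
      rw [hexp, ← tsum_mul_left]
      refine tsum_congr (fun k => ?_)
      rw [hg]
      have hpow : r ^ (n + 2*k + 1) = r^(n+1) * (r^2)^k := by
        rw [← pow_mul, ← pow_add]
        congr 1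
        omega
      show (-p)^k / (k.factorial:ℝ) * (f r * r ^ (n+2*k+1))
        = f r * r^(n+1) * ((-p*r^2)^k / (k.factorial:ℝ))
      rw [hpow, mul_pow]
      ring
    have hint_eq : ∀ k : ℕ, (2*π) * ∫ r, g k r ∂μ
        = (-1 : ℝ) ^ k * p ^ k / (k.factorial : ℝ) * c (n + 2 * k) := by
      intro k
      rw [hg]
      simp only []
      rw [integral_const_mul, hintc k, neg_pow]
      field_simp
    have h1 : (∫ r in Ioi (0:ℝ), f r * r ^ (n + 1) * Real.exp (-p * r ^ 2))
        = ∑' k, ∫ r, g k r ∂μ := by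
      rw [hkey]
      exact integral_congr_ae (Eventually.of_forall (fun r => (hptws r).symm))
    rw [h1, ← tsum_mul_left]
    exact tsum_congr hint_eq
end

section
/- For the constant volume emissivity shell with inner radius r_i ∈ [0,1), outer radius 1, and emissivity j_ν = 1/(4π), the surface brightness profile f(r) (given by the chord-length formula) has moments c_{2n} = ∫₀^1 r^{2n+1}√(1−r²) dr − ∫₀^{r_i} r^{2n+1}√(r_i²−r²) dr = Σ_{k=0}^n (−1)^{k+n} C(n,k) (1 − r_i^{2n+3})/(2n+3−2k). -/
open MeasureTheory Set Real

lemma shell_ftc (a : ℝ) (ha : 0 < a) (k : ℕ) :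
    ∫ r in (0:ℝ)..a, r * (a^2 - r^2)^k * Real.sqrt (a^2 - r^2)
      = a^(2*k+3) / (2*k+3) := by
  have hint : IntervalIntegrable
      (fun r => r * (a^2 - r^2)^k * Real.sqrt (a^2 - r^2)) volume 0 a := by
    apply Continuous.intervalIntegrable
    fun_prop
  have hcont : ContinuousOn
      (fun r : ℝ => -((a^2 - r^2)^(k+1) * Real.sqrt (a^2 - r^2)) / (2*(k:ℝ)+3))
      (Icc 0 a) := by
    apply Continuous.continuousOn
    fun_prop
  have hderiv : ∀ r ∈ Set.Ioo (0:ℝ) a,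
      HasDerivAt (fun r : ℝ => -((a^2 - r^2)^(k+1) * Real.sqrt (a^2 - r^2)) / (2*(k:ℝ)+3))
        (r * (a^2 - r^2)^k * Real.sqrt (a^2 - r^2)) r := by
    intro r hr
    have hu : 0 < a^2 - r^2 := by nlinarith [hr.1, hr.2]
    have hs : 0 < Real.sqrt (a^2 - r^2) := Real.sqrt_pos.mpr hu
    have h1 : HasDerivAt (fun r : ℝ => a^2 - r^2) (-(2*r)) r := by
      simpa using ((hasDerivAt_pow 2 r).const_sub (a^2))
    have h2 : HasDerivAt (fun r : ℝ => (a^2 - r^2)^(k+1))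
        (((k:ℝ)+1) * (a^2-r^2)^k * (-(2*r))) r := by
      have := h1.fun_pow (k+1)
      simpa using this
    have h3 : HasDerivAt (fun r : ℝ => Real.sqrt (a^2 - r^2))
        (1/(2*Real.sqrt (a^2-r^2)) * (-(2*r))) r :=
      (Real.hasDerivAt_sqrt hu.ne').comp r h1
    have h4 : HasDerivAt (fun x : ℝ => -((a^2 - x^2)^(k+1) * Real.sqrt (a^2 - x^2)) / (2*(k:ℝ)+3))
        (-(((k:ℝ)+1) * (a^2-r^2)^k * (-(2*r)) * Real.sqrt (a^2-r^2)
          + (a^2-r^2)^(k+1) * (1/(2*Real.sqrt (a^2-r^2)) * (-(2*r)))) / (2*(k:ℝ)+3)) r :=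
      ((h2.fun_mul h3).fun_neg).div_const (2*(k:ℝ)+3)
    convert h4 using 1
    have hs2 : Real.sqrt (a^2-r^2) ^ 2 = a^2 - r^2 := Real.sq_sqrt hu.le
    set s := Real.sqrt (a^2 - r^2) with hsdef
    rw [← hs2]
    field_simp
    ring
  rw [intervalIntegral.integral_eq_sub_of_hasDerivAt_of_le ha.le hcont hderiv hint]
  rw [show a^2 - a^2 = (0:ℝ) from sub_self _, show a^2 - 0^2 = a^2 by ring,
    Real.sqrt_zero, Real.sqrt_sq ha.le,
    show ((a^2)^(k+1) : ℝ) * a = a^(2*k+3) by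
      rw [← pow_mul, ← pow_succ, show 2*(k+1)+1 = 2*k+3 from by omega]]
  ring

lemma shell_key (a : ℝ) (ha : 0 ≤ a) (n : ℕ) :
    ∫ r in (0:ℝ)..a, r^(2*n+1) * Real.sqrt (a^2 - r^2)
      = ∑ k ∈ Finset.range (n+1), (-1:ℝ)^k * (n.choose k : ℝ) * a^(2*n+3) / (2*k+3) := by
  rcases eq_or_lt_of_le ha with h | h
  · rw [← h]
    simp
  · have hident : ∀ r : ℝ, r^(2*n+1) * Real.sqrt (a^2 - r^2)
        = ∑ k ∈ Finset.range (n+1), ((-1:ℝ)^k * (n.choose k : ℝ) * a^(2*(n-k)))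
            * (r * (a^2-r^2)^k * Real.sqrt (a^2-r^2)) := by
      intro r
      have hb : (r^2 : ℝ)^n
          = ∑ k ∈ Finset.range (n+1), (r^2 - a^2)^k * (a^2)^(n-k) * (n.choose k : ℝ) := by
        rw [← add_pow]
        ring_nf
      have hr1 : r^(2*n+1) = (r^2)^n * r := by
        rw [← pow_mul, ← pow_succ]
      rw [hr1, hb, Finset.sum_mul, Finset.sum_mul]
      apply Finset.sum_congr rfl
      intro k hk
      have hneg : (r^2 - a^2)^k = (-1:ℝ)^k * (a^2 - r^2)^k := by
        rw [show r^2 - a^2 = -(a^2 - r^2) by ring, neg_pow]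
      rw [hneg, ← pow_mul]
      ring
    rw [intervalIntegral.integral_congr (fun r _ => hident r)]
    rw [intervalIntegral.integral_finset_sum]
    · apply Finset.sum_congr rfl
      intro k hk
      have hkn : k ≤ n := Nat.lt_succ_iff.mp (Finset.mem_range.mp hk)
      rw [intervalIntegral.integral_const_mul, shell_ftc a h k]
      have hpow : a^(2*(n-k)) * a^(2*k+3) = a^(2*n+3) := by
        rw [← pow_add]
        congr 1
        omega
      calc ((-1:ℝ)^k * (n.choose k : ℝ) * a^(2*(n-k))) * (a^(2*k+3) / (2*(k:ℝ)+3))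
          = (-1:ℝ)^k * (n.choose k : ℝ) * (a^(2*(n-k)) * a^(2*k+3)) / (2*(k:ℝ)+3) := by
            ring
        _ = (-1:ℝ)^k * (n.choose k : ℝ) * a^(2*n+3) / (2*(k:ℝ)+3) := by rw [hpow]
    · intro k hk
      apply Continuous.intervalIntegrable
      fun_prop

theorem shell_moments
    (rᵢ : ℝ) (hri : 0 ≤ rᵢ) (hri1 : rᵢ < 1)
    (f : ℝ → ℝ)
    (hf : ∀ r : ℝ, 0 ≤ r →
      f r = if r ≤ rᵢ then (1 / (2 * π)) * (Real.sqrt (1 - r ^ 2) - Real.sqrt (rᵢ ^ 2 - r ^ 2))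
            else if r ≤ 1 then (1 / (2 * π)) * Real.sqrt (1 - r ^ 2)
            else 0) :
    ∀ n : ℕ,
      2 * π * (∫ r in Ioi (0:ℝ), f r * r ^ (2 * n + 1)) =
        (∫ r in (0:ℝ)..1, r ^ (2 * n + 1) * Real.sqrt (1 - r ^ 2)) -
          (∫ r in (0:ℝ)..rᵢ, r ^ (2 * n + 1) * Real.sqrt (rᵢ ^ 2 - r ^ 2)) ∧
      2 * π * (∫ r in Ioi (0:ℝ), f r * r ^ (2 * n + 1)) =
        ∑ k ∈ Finset.range (n + 1),
          (-1 : ℝ) ^ (k + n) * (n.choose k : ℝ) * (1 - rᵢ ^ (2 * n + 3)) / (2 * n + 3 - 2 * k) := by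
  intro n
  -- abbreviations
  set g : ℝ → ℝ := fun r => f r * r ^ (2 * n + 1) with hg
  set A : ℝ → ℝ := fun r => r ^ (2 * n + 1) * Real.sqrt (1 - r ^ 2) with hA
  set B : ℝ → ℝ := fun r => r ^ (2 * n + 1) * Real.sqrt (rᵢ ^ 2 - r ^ 2) with hB
  have hAc : Continuous A := by fun_prop
  have hBc : Continuous B := by fun_prop
  set c1 : ℝ → ℝ := fun r => (1 / (2 * π)) * (A r - B r) with hc1def
  set c2 : ℝ → ℝ := fun r => (1 / (2 * π)) * A r with hc2def
  have hc1 : Continuous c1 := by fun_prop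
  have hc2 : Continuous c2 := by fun_prop
  have e1 : EqOn c1 g (Ioc 0 rᵢ) := by
    intro x hx
    simp only [hg, hc1def, hA, hB]
    rw [hf x hx.1.le, if_pos hx.2]
    ring
  have e2 : EqOn c2 g (Ioc rᵢ 1) := by
    intro x hx
    simp only [hg, hc2def, hA]
    rw [hf x (hri.trans hx.1.le), if_neg (not_le.mpr hx.1), if_pos hx.2]
    ring
  have e3 : EqOn (fun _ : ℝ => (0:ℝ)) g (Ioi 1) := by
    intro x hx
    simp only [hg]
    rw [hf x (by linarith [mem_Ioi.mp hx])]
    rw [if_neg (by simp at hx; linarith), if_neg (by simp at hx; linarith)]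
    ring
  have h01 : IntegrableOn g (Ioc 0 rᵢ) := (hc1.integrableOn_Ioc).congr_fun e1 measurableSet_Ioc
  have h02 : IntegrableOn g (Ioc rᵢ 1) := (hc2.integrableOn_Ioc).congr_fun e2 measurableSet_Ioc
  have h03 : IntegrableOn g (Ioi 1) := by
    apply (integrableOn_zero).congr_fun _ measurableSet_Ioi
    exact e3
  have hIri : IntegrableOn g (Ioi rᵢ) := by
    rw [← Set.Ioc_union_Ioi_eq_Ioi hri1.le]
    exact integrableOn_union.mpr ⟨h02, h03⟩
  have hsplit : ∫ r in Ioi (0:ℝ), g r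
      = (∫ r in Ioc (0:ℝ) rᵢ, g r) + ((∫ r in Ioc rᵢ (1:ℝ), g r) + (∫ r in Ioi (1:ℝ), g r)) := by
    rw [← Set.Ioc_union_Ioi_eq_Ioi hri,
      setIntegral_union (Set.Ioc_disjoint_Ioi le_rfl) measurableSet_Ioi h01 hIri,
      ← Set.Ioc_union_Ioi_eq_Ioi hri1.le,
      setIntegral_union (Set.Ioc_disjoint_Ioi le_rfl) measurableSet_Ioi h02 h03]
  have hz : (∫ r in Ioi (1:ℝ), g r) = 0 := by
    apply setIntegral_eq_zero_of_forall_eq_zero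
    intro x hx
    exact (e3 hx).symm
  have hI1 : (∫ r in Ioc (0:ℝ) rᵢ, g r) = ∫ r in (0:ℝ)..rᵢ, c1 r := by
    rw [intervalIntegral.integral_of_le hri]
    exact (setIntegral_congr_fun measurableSet_Ioc e1).symm
  have hI2 : (∫ r in Ioc rᵢ (1:ℝ), g r) = ∫ r in rᵢ..(1:ℝ), c2 r := by
    rw [intervalIntegral.integral_of_le hri1.le]
    exact (setIntegral_congr_fun measurableSet_Ioc e2).symm
  have hiA1 : IntervalIntegrable A volume 0 rᵢ := hAc.intervalIntegrable _ _
  have hiA2 : IntervalIntegrable A volume rᵢ 1 := hAc.intervalIntegrable _ _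
  have hiB1 : IntervalIntegrable B volume 0 rᵢ := hBc.intervalIntegrable _ _
  have hadj : (∫ r in (0:ℝ)..rᵢ, A r) + (∫ r in rᵢ..(1:ℝ), A r) = ∫ r in (0:ℝ)..1, A r :=
    intervalIntegral.integral_add_adjacent_intervals hiA1 hiA2
  have hmain : 2 * π * (∫ r in Ioi (0:ℝ), g r)
      = (∫ r in (0:ℝ)..1, A r) - (∫ r in (0:ℝ)..rᵢ, B r) := by
    rw [hsplit, hz, hI1, hI2]
    simp only [hc1def, hc2def]
    rw [intervalIntegral.integral_const_mul, intervalIntegral.integral_const_mul,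
      intervalIntegral.integral_sub hiA1 hiB1]
    have hpi : (2 * π) * (1 / (2 * π)) = 1 := by
      field_simp
    rw [← hadj]
    field_simp [Real.pi_ne_zero]
    ring
  constructor
  · exact hmain
  · rw [hmain]
    have k1' : (∫ r in (0:ℝ)..1, A r)
        = ∑ k ∈ Finset.range (n+1), (-1:ℝ)^k * (n.choose k : ℝ) / (2*k+3) := by
      rw [show (∫ r in (0:ℝ)..1, A r) = ∫ r in (0:ℝ)..1, r^(2*n+1) * Real.sqrt (1^2 - r^2) by
            apply intervalIntegral.integral_congr; intro r _; simp [hA],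
        shell_key 1 zero_le_one n]
      simp
    have k2' : (∫ r in (0:ℝ)..rᵢ, B r)
        = ∑ k ∈ Finset.range (n+1), (-1:ℝ)^k * (n.choose k : ℝ) * rᵢ^(2*n+3) / (2*k+3) := by
      exact shell_key rᵢ hri n
    rw [k1', k2', ← Finset.sum_sub_distrib, ← Finset.sum_range_reflect]
    apply Finset.sum_congr rfl
    intro k hk
    have hkn : k ≤ n := Nat.lt_succ_iff.mp (Finset.mem_range.mp hk)
    have hidx : n + 1 - 1 - k = n - k := by omega
    rw [hidx]
    have hsign2 : (-1:ℝ) ^ (k + n) = (-1:ℝ) ^ (n - k) := by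
      have : k + n = (n - k) + 2 * k := by omega
      rw [this, pow_add, pow_mul, neg_one_sq, one_pow, mul_one]
    rw [hsign2, ← Nat.choose_symm hkn]
    have hden : (2 * (n:ℝ) + 3 - 2 * (k:ℝ)) = 2 * ((n - k : ℕ) : ℝ) + 3 := by
      rw [Nat.cast_sub hkn]
      ring
    rw [hden]
    ring
end

section
/- For the constant volume emissivity shell with outer radius 1 and inner radius r_i ∈ [0,1), the limiting conversion factor is γ(0) = √( 5(1 − r_i³) / (2 (1 − r_i⁵) ln 2) ), where γ(0) = √(c₀/(c₂ ln 2)) and c₀, c₂ are the zeroth and second radial moments of the shell profile. -/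
open MeasureTheory Set Real intervalIntegral

lemma subst_moment (a : ℝ) (g : ℝ → ℝ) (hg : Continuous g) :
    (∫ r in (0:ℝ)..a, (-(2 * r)) * g (a ^ 2 - r ^ 2)) = ∫ u in (a ^ 2)..(a ^ 2 - a ^ 2), g u := by
  have h := intervalIntegral.integral_comp_smul_deriv (a := (0:ℝ)) (b := a)
    (f := fun r => a ^ 2 - r ^ 2) (f' := fun r => -(2 * r)) (g := g)
    (fun x _ => by simpa using (hasDerivAt_pow 2 x).const_sub (a ^ 2))
    (by fun_prop) hg
  simpa using h

lemma sqrt_int (c : ℝ) (hc : 0 ≤ c) :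
    (∫ u in (0:ℝ)..c, Real.sqrt u) = 2 / 3 * c ^ (3/2 : ℝ) := by
  have : (∫ u in (0:ℝ)..c, Real.sqrt u) = ∫ u in (0:ℝ)..c, u ^ (1/2 : ℝ) := by
    simp [Real.sqrt_eq_rpow]
  rw [this, integral_rpow (Or.inl (by norm_num)), Real.zero_rpow (by norm_num)]
  norm_num
  ring

lemma u_sqrt_int (c : ℝ) (hc : 0 ≤ c) :
    (∫ u in (0:ℝ)..c, u * Real.sqrt u) = 2 / 5 * c ^ (5/2 : ℝ) := by
  have : (∫ u in (0:ℝ)..c, u * Real.sqrt u) = ∫ u in (0:ℝ)..c, u ^ (3/2 : ℝ) := by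
    apply intervalIntegral.integral_congr
    intro u hu
    rw [uIcc_of_le hc] at hu
    show u * Real.sqrt u = u ^ (3/2 : ℝ)
    rw [Real.sqrt_eq_rpow, show (3/2:ℝ) = 1 + 1/2 by norm_num,
      Real.rpow_add' hu.1 (by norm_num), Real.rpow_one]
  rw [this, integral_rpow (Or.inl (by norm_num)), Real.zero_rpow (by norm_num)]
  norm_num
  ring

lemma pow_half3 (a : ℝ) (ha : 0 ≤ a) : (a ^ 2) ^ (3/2 : ℝ) = a ^ 3 := by
  rw [← Real.rpow_natCast a 2, ← Real.rpow_mul ha]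
  norm_num

lemma pow_half5 (a : ℝ) (ha : 0 ≤ a) : (a ^ 2) ^ (5/2 : ℝ) = a ^ 5 := by
  rw [← Real.rpow_natCast a 2, ← Real.rpow_mul ha]
  norm_num

lemma moment1 (a : ℝ) (ha : 0 ≤ a) :
    (∫ r in (0:ℝ)..a, r * Real.sqrt (a ^ 2 - r ^ 2)) = a ^ 3 / 3 := by
  have h := subst_moment a Real.sqrt Real.continuous_sqrt
  have h2 : (∫ r in (0:ℝ)..a, (-(2 * r)) * Real.sqrt (a ^ 2 - r ^ 2)) =
      -2 * ∫ r in (0:ℝ)..a, r * Real.sqrt (a ^ 2 - r ^ 2) := by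
    rw [← intervalIntegral.integral_const_mul]
    apply intervalIntegral.integral_congr
    intro x _; ring
  rw [h2, show a ^ 2 - a ^ 2 = 0 by ring,
    show (∫ u in (a^2:ℝ)..0, Real.sqrt u) = -(2/3 * a^3) from by
      rw [intervalIntegral.integral_symm, sqrt_int _ (by positivity), pow_half3 a ha]] at h
  linarith

lemma moment3 (a : ℝ) (ha : 0 ≤ a) :
    (∫ r in (0:ℝ)..a, r ^ 3 * Real.sqrt (a ^ 2 - r ^ 2)) = 2 * a ^ 5 / 15 := by
  have hg : Continuous (fun u => (a ^ 2 - u) * Real.sqrt u) := by fun_prop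
  have h := subst_moment a (fun u => (a ^ 2 - u) * Real.sqrt u) hg
  have h2 : (∫ r in (0:ℝ)..a, (-(2 * r)) * ((a ^ 2 - (a ^ 2 - r ^ 2)) * Real.sqrt (a ^ 2 - r ^ 2))) =
      -2 * ∫ r in (0:ℝ)..a, r ^ 3 * Real.sqrt (a ^ 2 - r ^ 2) := by
    rw [← intervalIntegral.integral_const_mul]
    apply intervalIntegral.integral_congr
    intro x _; show _ = -2 * (x ^ 3 * Real.sqrt (a ^ 2 - x ^ 2)); ring
  rw [h2] at h
  have h3 : (∫ u in (0:ℝ)..a ^ 2, (a ^ 2 - u) * Real.sqrt u) = 4 * a ^ 5 / 15 := by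
    have hsplit : (∫ u in (0:ℝ)..a ^ 2, (a ^ 2 - u) * Real.sqrt u) =
        (∫ u in (0:ℝ)..a ^ 2, a ^ 2 * Real.sqrt u) - ∫ u in (0:ℝ)..a ^ 2, u * Real.sqrt u := by
      rw [← intervalIntegral.integral_sub ((by fun_prop : Continuous fun u => a^2 * Real.sqrt u).intervalIntegrable _ _)
        ((by fun_prop : Continuous fun u : ℝ => u * Real.sqrt u).intervalIntegrable _ _)]
      apply intervalIntegral.integral_congr
      intro x _; ring
    rw [hsplit, intervalIntegral.integral_const_mul, sqrt_int _ (by positivity),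
      u_sqrt_int _ (by positivity), pow_half3 a ha, pow_half5 a ha]
    ring
  rw [show a ^ 2 - a ^ 2 = 0 by ring,
    show (∫ u in (a^2:ℝ)..0, (fun u => (a ^ 2 - u) * Real.sqrt u) u) = -(4 * a^5/15) from by
      rw [intervalIntegral.integral_symm, h3]] at h
  linarith

theorem shell_gamma_zero
    (rᵢ : ℝ) (hri : 0 ≤ rᵢ) (hri1 : rᵢ < 1)
    (c₀ c₂ : ℝ)
    (hc₀ : c₀ = (∫ r in (0:ℝ)..1, r * Real.sqrt (1 - r ^ 2)) -
      (∫ r in (0:ℝ)..rᵢ, r * Real.sqrt (rᵢ ^ 2 - r ^ 2)))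
    (hc₂ : c₂ = (∫ r in (0:ℝ)..1, r ^ 3 * Real.sqrt (1 - r ^ 2)) -
      (∫ r in (0:ℝ)..rᵢ, r ^ 3 * Real.sqrt (rᵢ ^ 2 - r ^ 2))) :
    Real.sqrt (c₀ / (c₂ * Real.log 2)) =
      Real.sqrt (5 * (1 - rᵢ ^ 3) / (2 * (1 - rᵢ ^ 5) * Real.log 2)) := by
  have m1 := moment1 1 (by norm_num)
  have m3 := moment3 1 (by norm_num)
  simp only [one_pow] at m1 m3
  rw [hc₀, hc₂, m1, m3, moment1 rᵢ hri, moment3 rᵢ hri]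
  congr 1
  have h5 : (1:ℝ) - rᵢ ^ 5 ≠ 0 := by nlinarith [pow_lt_one₀ hri hri1 (by norm_num : 5 ≠ 0)]
  have hl : Real.log 2 ≠ 0 := (Real.log_pos (by norm_num)).ne'
  have hA : (2 * 1 / 15 - 2 * rᵢ ^ 5 / 15) * Real.log 2 ≠ 0 := by
    apply mul_ne_zero _ hl
    intro h; apply h5; linarith
  have hB : 2 * (1 - rᵢ ^ 5) * Real.log 2 ≠ 0 := by
    apply mul_ne_zero (mul_ne_zero (by norm_num) h5) hl
  rw [div_eq_div_iff hA hB]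
  ring
end

section
/- For all n, k ∈ ℕ with k ≤ n, the identity Σ_{i=k}^n (−1)^k (a_{n,i}/k!) Σ_{l=0}^k (−1)^l C(k,l) l^i = n!² / ((n−k)! k!²) holds, where the coefficients a_{n,i} are defined by (l+n)!/l! = Σ_{i=0}^n a_{n,i} l^i for all l ∈ ℕ (i.e., a_{n,i} are unsigned Stirling-type coefficients of the rising factorial). -/
open Finset

lemma diff_step (k : ℕ) (f : ℕ → ℝ) :
    ∑ l ∈ range (k+2), (-1:ℝ)^l * ((k+1).choose l : ℝ) * f l
    = ∑ l ∈ range (k+1), (-1:ℝ)^l * (k.choose l : ℝ) * (f l - f (l+1)) := by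
  rw [Finset.sum_range_succ' (fun l => (-1:ℝ)^l * ((k+1).choose l : ℝ) * f l) (k+1)]
  have h1 : ∀ l, ((k+1).choose (l+1) : ℝ) = (k.choose l : ℝ) + (k.choose (l+1) : ℝ) := by
    intro l; rw [Nat.choose_succ_succ]; push_cast; ring
  have h2 : ∑ l ∈ range (k+1), (-1:ℝ)^(l+1) * ((k+1).choose (l+1) : ℝ) * f (l+1)
      = (∑ l ∈ range (k+1), (-1:ℝ)^(l+1) * (k.choose l : ℝ) * f (l+1))
        + ∑ l ∈ range (k+1), (-1:ℝ)^(l+1) * (k.choose (l+1) : ℝ) * f (l+1) := by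
    rw [← Finset.sum_add_distrib]
    refine Finset.sum_congr rfl fun l _ => ?_
    rw [h1]; ring
  rw [h2]
  have h3 : (∑ l ∈ range (k+1), (-1:ℝ)^(l+1) * (k.choose (l+1) : ℝ) * f (l+1))
      + (-1:ℝ)^0 * ((k+1).choose 0 : ℝ) * f 0
      = ∑ l ∈ range (k+1), (-1:ℝ)^l * (k.choose l : ℝ) * f l := by
    rw [Finset.sum_range_succ' (fun l => (-1:ℝ)^l * (k.choose l : ℝ) * f l) k,
      Finset.sum_range_succ]
    simp [Nat.choose_succ_self]
  rw [add_assoc, h3, ← Finset.sum_add_distrib]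
  refine Finset.sum_congr rfl fun l _ => ?_
  ring

lemma vanish (k : ℕ) : ∀ i < k, ∑ l ∈ range (k+1), (-1:ℝ)^l * (k.choose l : ℝ) * (l:ℝ)^i = 0 := by
  induction k with
  | zero => intro i hi; omega
  | succ k ih =>
    intro i hi
    rw [show k+1+1 = k+2 from rfl, diff_step k (fun l => (l:ℝ)^i)]
    have key : ∀ l : ℕ, ((l:ℝ)^i - ((l:ℝ)+1)^i)
        = ∑ j ∈ range i, -((i.choose j : ℝ) * (l:ℝ)^j) := by
      intro l
      rw [add_pow ((l:ℝ)) 1 i, Finset.sum_range_succ]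
      simp only [one_pow, mul_one, Nat.choose_self, Nat.cast_one]
      rw [Finset.sum_congr rfl (fun j _ => by ring : ∀ j ∈ range i, (l:ℝ)^j * ((i.choose j : ℕ):ℝ) = -(-((i.choose j : ℝ) * (l:ℝ)^j))), Finset.sum_neg_distrib]
      ring
    calc ∑ l ∈ range (k+1), (-1:ℝ)^l * (k.choose l : ℝ) * ((fun l : ℕ => (l:ℝ)^i) l - (fun l : ℕ => (l:ℝ)^i) (l+1))
        = ∑ l ∈ range (k+1), ∑ j ∈ range i, -((-1:ℝ)^l * (k.choose l : ℝ) * ((i.choose j : ℝ) * (l:ℝ)^j)) := by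
          refine Finset.sum_congr rfl fun l _ => ?_
          simp only [Nat.cast_add, Nat.cast_one]
          rw [key l, Finset.mul_sum]
          exact Finset.sum_congr rfl fun j _ => by ring
      _ = ∑ j ∈ range i, -((i.choose j : ℝ) * ∑ l ∈ range (k+1), (-1:ℝ)^l * (k.choose l : ℝ) * (l:ℝ)^j) := by
          rw [Finset.sum_comm]
          refine Finset.sum_congr rfl fun j _ => ?_
          rw [Finset.mul_sum, ← Finset.sum_neg_distrib]
          exact Finset.sum_congr rfl fun l _ => by ring
      _ = 0 := by
          refine Finset.sum_eq_zero fun j hj => ?_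
          rw [ih j (by simp at hj; omega)]
          simp

lemma choose_diff (m : ℕ) : ∀ (k n : ℕ), k ≤ n →
    ∑ l ∈ range (k+1), (-1:ℝ)^l * (k.choose l : ℝ) * ((m+l).choose n : ℝ)
    = (-1:ℝ)^k * (m.choose (n-k) : ℝ) := by
  intro k
  induction k with
  | zero => intro n _; simp
  | succ k ih =>
    intro n hn
    rw [show k+1+1 = k+2 from rfl, diff_step k (fun l => ((m+l).choose n : ℝ))]
    obtain ⟨n', rfl⟩ : ∃ n', n = n' + 1 := ⟨n - 1, by omega⟩
    have key : ∀ l : ℕ, (((m+l).choose (n'+1) : ℝ) - ((m+(l+1)).choose (n'+1) : ℝ))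
        = -((m+l).choose n' : ℝ) := by
      intro l
      rw [show m + (l+1) = (m+l) + 1 from by omega, Nat.choose_succ_succ' (m+l) n']
      push_cast; ring
    calc ∑ l ∈ range (k+1), (-1:ℝ)^l * (k.choose l : ℝ) *
          ((fun l : ℕ => ((m+l).choose (n'+1) : ℝ)) l - (fun l : ℕ => ((m+l).choose (n'+1) : ℝ)) (l+1))
        = -∑ l ∈ range (k+1), (-1:ℝ)^l * (k.choose l : ℝ) * ((m+l).choose n' : ℝ) := by
          rw [← Finset.sum_neg_distrib]
          exact Finset.sum_congr rfl fun l _ => by rw [key l]; ring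
      _ = (-1:ℝ)^(k+1) * (m.choose (n'+1-(k+1)) : ℝ) := by
          rw [ih n' (by omega)]
          rw [show n'+1-(k+1) = n'-k from by omega]
          ring

theorem bnk_identity
    (n k : ℕ) (hk : k ≤ n)
    (a : ℕ → ℝ)
    (ha : ∀ l : ℕ, (((l + n).factorial : ℝ) / (l.factorial : ℝ)) =
      ∑ i ∈ Finset.range (n + 1), a i * (l : ℝ) ^ i) :
    ∑ i ∈ Finset.Icc k n, (-1 : ℝ) ^ k * (a i / (k.factorial : ℝ)) *
        ∑ l ∈ Finset.range (k + 1), (-1 : ℝ) ^ l * (k.choose l : ℝ) * (l : ℝ) ^ i =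
      ((n.factorial : ℝ)) ^ 2 / (((n - k).factorial : ℝ) * ((k.factorial : ℝ)) ^ 2) := by
  set S : ℕ → ℝ := fun i => ∑ l ∈ Finset.range (k + 1), (-1 : ℝ) ^ l * (k.choose l : ℝ) * (l : ℝ) ^ i with hS
  have hkf : (k.factorial : ℝ) ≠ 0 := by positivity
  have h1 : ∑ i ∈ Finset.Icc k n, (-1 : ℝ) ^ k * (a i / (k.factorial : ℝ)) * S i
      = (-1:ℝ)^k / (k.factorial : ℝ) * ∑ i ∈ Finset.Icc k n, a i * S i := by
    rw [Finset.mul_sum]; exact Finset.sum_congr rfl fun i _ => by ring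
  have h2 : ∑ i ∈ Finset.Icc k n, a i * S i = ∑ i ∈ Finset.range (n+1), a i * S i := by
    rw [Finset.range_eq_Ico, show Finset.Icc k n = Finset.Ico k (n+1) from rfl.trans (by rw [Finset.Ico_add_one_right_eq_Icc])]
    rw [← Finset.sum_Ico_consecutive _ (Nat.zero_le k) (by omega : k ≤ n+1)]
    have : ∑ i ∈ Finset.Ico 0 k, a i * S i = 0 := by
      refine Finset.sum_eq_zero fun i hi => ?_
      rw [hS]
      simp only
      rw [vanish k i (by simp at hi; omega), mul_zero]
    rw [this, zero_add]
  have h3 : ∑ i ∈ Finset.range (n+1), a i * S i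
      = ∑ l ∈ Finset.range (k+1), (-1:ℝ)^l * (k.choose l : ℝ) * (((l + n).factorial : ℝ) / (l.factorial : ℝ)) := by
    calc ∑ i ∈ Finset.range (n+1), a i * S i
        = ∑ i ∈ Finset.range (n+1), ∑ l ∈ Finset.range (k+1),
            a i * ((-1:ℝ)^l * (k.choose l : ℝ) * (l : ℝ)^i) := by
          exact Finset.sum_congr rfl fun i _ => Finset.mul_sum _ _ _
      _ = ∑ l ∈ Finset.range (k+1), ∑ i ∈ Finset.range (n+1),
            a i * ((-1:ℝ)^l * (k.choose l : ℝ) * (l : ℝ)^i) := Finset.sum_comm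
      _ = ∑ l ∈ Finset.range (k+1), (-1:ℝ)^l * (k.choose l : ℝ) * (((l + n).factorial : ℝ) / (l.factorial : ℝ)) := by
          refine Finset.sum_congr rfl fun l _ => ?_
          rw [ha l, Finset.mul_sum]
          exact Finset.sum_congr rfl fun i _ => by ring
  have h4 : ∀ l : ℕ, (((l + n).factorial : ℝ) / (l.factorial : ℝ))
      = (n.factorial : ℝ) * ((n+l).choose n : ℝ) := by
    intro l
    have hb := Nat.choose_mul_factorial_mul_factorial (Nat.le_add_right n l)
    rw [show n + l - n = l from by omega] at hb
    have hlf : (l.factorial : ℝ) ≠ 0 := by positivity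
    rw [show l + n = n + l from by omega]
    field_simp
    have : ((n+l).factorial : ℝ) = ((n+l).choose n : ℝ) * (n.factorial : ℝ) * (l.factorial : ℝ) := by
      exact_mod_cast congrArg (Nat.cast : ℕ → ℝ) hb.symm
    rw [this]; ring
  have h5 : ∑ l ∈ Finset.range (k+1), (-1:ℝ)^l * (k.choose l : ℝ) * (((l + n).factorial : ℝ) / (l.factorial : ℝ))
      = (n.factorial : ℝ) * ((-1:ℝ)^k * (n.choose (n-k) : ℝ)) := by
    rw [← choose_diff n k n hk, Finset.mul_sum]
    exact Finset.sum_congr rfl fun l _ => by rw [h4 l]; ring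
  rw [h1, h2, h3, h5]
  have hcs : (n.choose (n-k) : ℝ) = (n.choose k : ℝ) := by
    exact_mod_cast Nat.choose_symm hk
  have hb : ((n.choose k : ℝ)) * (k.factorial : ℝ) * ((n-k).factorial : ℝ) = (n.factorial : ℝ) := by
    exact_mod_cast congrArg (Nat.cast : ℕ → ℝ) (Nat.choose_mul_factorial_mul_factorial hk)
  have hnkf : ((n-k).factorial : ℝ) ≠ 0 := by positivity
  rw [hcs]
  have hsq : (-1:ℝ)^k * (-1:ℝ)^k = 1 := by
    rw [← pow_add, ← two_mul, pow_mul]; norm_num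
  field_simp
  · linear_combination ((k.factorial : ℝ) * (n.choose k : ℝ) * ((n-k).factorial : ℝ)) * hsq + hb
end

section
/- Let f be a nonnegative, bounded, compactly supported circularly symmetric profile with moments c_{2n}, and let f_c be its convolution with the normalized gaussian (p/π)e^{−p|x|²}. Then the moments of the convolved profile satisfy c'_{2n} = Σ_{k=0}^n [n!²/((n−k)! k!²)] c_{2k} / p^{n−k}; in particular c'₀ = c₀ and c'₂ = c₀/p + c₂. -/
open MeasureTheory Set Real Metric Finset

namespace ConvMoments

lemma intg_pow {p : ℝ} (hp : 0 < p) (m : ℕ) :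
    Integrable (fun x : ℝ => x ^ m * Real.exp (-p * x ^ 2)) := by
  have h : (-1:ℝ) < (m:ℝ) := lt_of_lt_of_le neg_one_lt_zero (Nat.cast_nonneg m)
  simpa [Real.rpow_natCast] using integrable_rpow_mul_exp_neg_mul_sq hp h

lemma abs_pow_le (x : ℝ) (m : ℕ) : |x| ^ m ≤ 1 + x ^ (2 * m) := by
  have h : (|x| ^ m) ^ 2 = x ^ (2 * m) := by
    rw [← pow_mul, mul_comm m 2, pow_mul, sq_abs, ← pow_mul]
  nlinarith [pow_nonneg (abs_nonneg x) m]

lemma intg_abs_pow {p : ℝ} (hp : 0 < p) (m : ℕ) :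
    Integrable (fun x : ℝ => |x| ^ m * Real.exp (-p * x ^ 2)) := by
  refine Integrable.mono' ((integrable_exp_neg_mul_sq hp).add (intg_pow hp (2*m)))
    ((((continuous_abs.pow m).mul
      ((continuous_const.mul (continuous_pow 2)).rexp))).aestronglyMeasurable) ?_
  filter_upwards with x
  have he : (0:ℝ) ≤ Real.exp (-p * x ^ 2) := (Real.exp_pos _).le
  have h1 : ‖|x| ^ m * Real.exp (-p * x ^ 2)‖ = |x| ^ m * Real.exp (-p * x ^ 2) := by
    rw [Real.norm_eq_abs, abs_mul, abs_of_nonneg (pow_nonneg (abs_nonneg x) m),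
      abs_of_nonneg he]
  have h2 := mul_le_mul_of_nonneg_right (abs_pow_le x m) he
  simp only [Pi.add_apply]
  rw [h1]
  nlinarith [h2]

lemma norm_mk_sq (u v : ℝ) : ‖Complex.mk u v‖ ^ 2 = u ^ 2 + v ^ 2 := by
  rw [Complex.sq_norm, Complex.normSq_mk]; ring

lemma norm_mk_le (u v : ℝ) : ‖Complex.mk u v‖ ≤ |u| + |v| := by
  simpa using Complex.norm_le_abs_re_add_abs_im ⟨u, v⟩

lemma cont_gauss {p : ℝ} (m : ℕ) :
    Continuous fun w : ℂ => ‖w‖ ^ m * Real.exp (-p * ‖w‖ ^ 2) :=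
  (continuous_norm.pow m).mul ((continuous_const.mul (continuous_norm.pow 2)).rexp)

lemma intg_norm_pow_complex {p : ℝ} (hp : 0 < p) (m : ℕ) :
    Integrable (fun w : ℂ => ‖w‖ ^ m * Real.exp (-p * ‖w‖ ^ 2)) := by
  have hmp : MeasurePreserving (Complex.measurableEquivRealProd.symm) volume volume :=
    Complex.volume_preserving_equiv_real_prod.symm _
  rw [← hmp.integrable_comp_emb (MeasurableEquiv.measurableEmbedding _)]
  refine Integrable.mono' (g := fun z : ℝ × ℝ => ∑ i ∈ Finset.range (m+1),
      (m.choose i : ℝ) * ((|z.1| ^ i * Real.exp (-p * z.1 ^ 2)) *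
        (|z.2| ^ (m - i) * Real.exp (-p * z.2 ^ 2)))) ?_ ?_ ?_
  · exact integrable_finset_sum _ fun i _ =>
      (((intg_abs_pow hp i).mul_prod (intg_abs_pow hp (m - i))).const_mul _)
  · exact ((cont_gauss m).measurable.comp
      (Complex.measurableEquivRealProd.symm.measurable)).aestronglyMeasurable
  · filter_upwards with z
    have hs : Complex.measurableEquivRealProd.symm z = Complex.mk z.1 z.2 := rfl
    simp only [Function.comp_apply, hs]
    have hn : (0:ℝ) ≤ ‖Complex.mk z.1 z.2‖ := norm_nonneg _
    have he : (0:ℝ) ≤ Real.exp (-p * ‖Complex.mk z.1 z.2‖ ^ 2) := (Real.exp_pos _).le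
    rw [Real.norm_eq_abs, abs_mul, abs_of_nonneg (pow_nonneg hn m), abs_of_nonneg he]
    have h1 : ‖Complex.mk z.1 z.2‖ ^ m ≤ (|z.1| + |z.2|) ^ m :=
      pow_le_pow_left₀ hn (norm_mk_le _ _) m
    have h2 : Real.exp (-p * ‖Complex.mk z.1 z.2‖ ^ 2)
        = Real.exp (-p * z.1 ^ 2) * Real.exp (-p * z.2 ^ 2) := by
      rw [← Real.exp_add, norm_mk_sq]; ring_nf
    calc ‖Complex.mk z.1 z.2‖ ^ m * Real.exp (-p * ‖Complex.mk z.1 z.2‖ ^ 2)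
        ≤ (|z.1| + |z.2|) ^ m * Real.exp (-p * ‖Complex.mk z.1 z.2‖ ^ 2) :=
          mul_le_mul_of_nonneg_right h1 he
      _ = ∑ i ∈ Finset.range (m+1),
          (m.choose i : ℝ) * ((|z.1| ^ i * Real.exp (-p * z.1 ^ 2)) *
            (|z.2| ^ (m - i) * Real.exp (-p * z.2 ^ 2))) := by
          rw [add_pow, h2, Finset.sum_mul]
          refine Finset.sum_congr rfl fun i _ => by ring

lemma intg_term {p : ℝ} (hp : 0 < p) (i j : ℕ) :
    Integrable (fun w : ℂ =>
      ((p / π * Real.exp (-p * ‖w‖ ^ 2) : ℝ) : ℂ) * (w ^ i * (starRingEnd ℂ w) ^ j)) := by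
  have hpπ : (0:ℝ) ≤ p / π := div_nonneg hp.le Real.pi_pos.le
  refine Integrable.mono' ((intg_norm_pow_complex hp (i+j)).const_mul (p/π)) ?_ ?_
  · refine Continuous.aestronglyMeasurable ?_
    exact (Complex.continuous_ofReal.comp
        ((continuous_const.mul ((continuous_const.mul (continuous_norm.pow 2)).rexp)))).mul
      ((continuous_pow i).mul ((Complex.continuous_conj).pow j))
  · filter_upwards with w
    rw [norm_mul, norm_mul, norm_pow, norm_pow, Complex.norm_real, RCLike.norm_conj]
    rw [Real.norm_eq_abs, abs_of_nonneg (mul_nonneg hpπ (Real.exp_pos _).le)]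
    exact le_of_eq (by rw [← pow_add]; ring)

lemma Kzero {p : ℝ} (hp : 0 < p) {i j : ℕ} (hij : i ≠ j) :
    ∫ w : ℂ, ((p / π * Real.exp (-p * ‖w‖ ^ 2) : ℝ) : ℂ)
      * (w ^ i * (starRingEnd ℂ w) ^ j) = 0 := by
  set G : ℂ → ℂ := fun w =>
    ((p / π * Real.exp (-p * ‖w‖ ^ 2) : ℝ) : ℂ) * (w ^ i * (starRingEnd ℂ w) ^ j) with hG
  set d : ℤ := (i:ℤ) - (j:ℤ) with hd
  have hd0 : (d:ℝ) ≠ 0 := by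
    simp only [hd]
    push_cast
    intro h
    exact hij (by exact_mod_cast sub_eq_zero.mp h)
  set θ : ℝ := π / (d:ℝ) with hθ
  set c : Circle := Circle.exp θ with hc
  have hcoe : (c : ℂ) = Complex.exp (θ * Complex.I) := Circle.coe_exp θ
  have ha : (c:ℂ) ^ i * (starRingEnd ℂ (c:ℂ)) ^ j = -1 := by
    have h1 : (c:ℂ) ^ i = Complex.exp ((i:ℂ) * (θ * Complex.I)) := by
      rw [hcoe, Complex.exp_nat_mul]
    have hconj : (starRingEnd ℂ) ((θ:ℂ) * Complex.I) = -((θ:ℂ) * Complex.I) := by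
      simp [Complex.conj_I]
    have h2 : (starRingEnd ℂ (c:ℂ)) ^ j = Complex.exp ((j:ℂ) * (-((θ:ℂ) * Complex.I))) := by
      rw [hcoe, ← Complex.exp_conj, hconj, Complex.exp_nat_mul]
    rw [h1, h2, ← Complex.exp_add]
    have h3 : (i:ℂ) * ((θ:ℂ) * Complex.I) + (j:ℂ) * (-((θ:ℂ) * Complex.I))
        = ((d:ℝ):ℂ) * (θ:ℂ) * Complex.I := by
      simp only [hd]
      push_cast
      ring
    rw [h3]
    have hdZ : (d:ℂ) ≠ 0 := by exact_mod_cast hd0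
    have h4 : ((d:ℝ):ℂ) * (θ:ℂ) = (π:ℂ) := by
      rw [hθ]
      push_cast
      field_simp [hdZ]
    rw [h4]
    exact Complex.exp_pi_mul_I
  have key : ∫ w, G ((rotation c) w) = ∫ w, G w := MeasureTheory.integral_comp (rotation c) G
  have hpt : ∀ w : ℂ, G ((rotation c) w) = (-1) * G w := by
    intro w
    simp only [hG, rotation_apply]
    rw [show ‖(c:ℂ) * w‖ = ‖w‖ by rw [norm_mul, Circle.norm_coe, one_mul]]
    rw [mul_pow, map_mul, mul_pow]
    linear_combination (((p / π * Real.exp (-p * ‖w‖ ^ 2) : ℝ) : ℂ)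
      * (w ^ i * (starRingEnd ℂ w) ^ j)) * ha
  have h5 : (∫ w, G w) = -1 * ∫ w, G w := by
    conv_lhs => rw [← key]
    simp only [hpt]
    rw [integral_const_mul]
  linear_combination h5 / 2

end ConvMoments

namespace ConvMoments

lemma Kdiag {p : ℝ} (hp : 0 < p) (i : ℕ) :
    ∫ w : ℂ, (p / π * Real.exp (-p * ‖w‖ ^ 2)) * ‖w‖ ^ (2 * i)
      = (i.factorial : ℝ) / p ^ i := by
  have h := integral_fun_norm_addHaar (volume : Measure ℂ)
    (fun r : ℝ => p / π * Real.exp (-p * r ^ 2) * r ^ (2 * i))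
  rw [Complex.finrank_real_complex] at h
  have hball : ((volume (ball (0:ℂ) 1)).toReal) = π := by
    rw [Complex.volume_ball]
    simp [ENNReal.toReal_mul, Real.pi_nonneg]
  rw [measureReal_def, hball] at h
  have h3 : ∫ r in Ioi (0:ℝ), r ^ (2*i+1) * Real.exp (-p * r ^ 2)
      = (i.factorial : ℝ) / (2 * p ^ (i+1)) := by
    have hq : (-1:ℝ) < ((2*i+1 : ℕ):ℝ) :=
      lt_of_lt_of_le neg_one_lt_zero (Nat.cast_nonneg _)
    have h4 := integral_rpow_mul_exp_neg_mul_rpow zero_lt_two hq hp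
    rw [show ((((2*i+1:ℕ):ℝ)) + 1)/2 = ((i:ℝ) + 1) by push_cast; ring] at h4
    rw [show (-(((2*i+1:ℕ):ℝ) + 1))/2 = -(((i+1:ℕ)):ℝ) by push_cast; ring] at h4
    rw [Real.Gamma_nat_eq_factorial, Real.rpow_neg hp.le, Real.rpow_natCast] at h4
    simp only [Real.rpow_natCast, Real.rpow_two] at h4
    rw [h4]; ring
  have h2 : ∫ r in Ioi (0:ℝ), r ^ (2-1) • (p / π * Real.exp (-p * r ^ 2) * r ^ (2 * i))
      = (p/π) * ((i.factorial : ℝ) / (2 * p ^ (i+1))) := by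
    rw [← h3, ← integral_const_mul]
    refine setIntegral_congr_fun measurableSet_Ioi fun r hr => ?_
    simp only [smul_eq_mul]; ring
  rw [h2] at h
  rw [h]
  have hπ : (π : ℝ) ≠ 0 := Real.pi_ne_zero
  have hp0 : p ≠ 0 := hp.ne'
  simp only [nsmul_eq_mul, smul_eq_mul, Nat.cast_ofNat]
  field_simp
  ring

lemma fact_ne (k : ℕ) : ((k.factorial : ℝ)) ≠ 0 :=
  Nat.cast_ne_zero.mpr k.factorial_ne_zero

lemma real_sum {p : ℝ} (hp : p ≠ 0) (n : ℕ) (t : ℝ) :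
    ∑ i ∈ Finset.range (n+1), (n.choose i : ℝ)^2 * t^(n-i) * (i.factorial : ℝ) / p^i
      = ∑ k ∈ Finset.range (n+1),
          (n.factorial : ℝ)^2 / (((n-k).factorial : ℝ) * ((k.factorial : ℝ))^2) * t^k / p^(n-k) := by
  rw [← Finset.sum_range_reflect]
  refine Finset.sum_congr rfl fun i hi => ?_
  have hin : i ≤ n := Nat.lt_succ_iff.mp (Finset.mem_range.mp hi)
  have h1 : n + 1 - 1 - i = n - i := by omega
  rw [h1]
  have h2 : n - (n - i) = i := Nat.sub_sub_self hin
  rw [h2]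
  rw [Nat.choose_symm hin, Nat.cast_choose ℝ hin]
  have := fact_ne n; have := fact_ne i; have := fact_ne (n-i)
  field_simp

lemma hz_mul_conj (z : ℂ) : ((‖z‖^2 : ℝ) : ℂ) = z * (starRingEnd ℂ) z := by
  rw [Complex.mul_conj, Complex.sq_norm]

lemma gauss_moment {p : ℝ} (hp : 0 < p) (n : ℕ) (y : ℂ) :
    ∫ w : ℂ, p / π * Real.exp (-p * ‖w‖ ^ 2) * ‖y + w‖ ^ (2 * n)
      = ∑ k ∈ Finset.range (n + 1),
          (n.factorial : ℝ) ^ 2 / (((n - k).factorial : ℝ) * ((k.factorial : ℝ)) ^ 2)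
            * ‖y‖ ^ (2 * k) / p ^ (n - k) := by
  have hpt : ∀ w : ℂ, ((p / π * Real.exp (-p * ‖w‖ ^ 2) * ‖y + w‖ ^ (2 * n) : ℝ) : ℂ)
      = ∑ i ∈ Finset.range (n+1), ∑ j ∈ Finset.range (n+1),
          (y ^ (n - i) * (starRingEnd ℂ y) ^ (n - j) * (n.choose i : ℂ) * (n.choose j : ℂ))
            * (((p / π * Real.exp (-p * ‖w‖ ^ 2) : ℝ) : ℂ) * (w ^ i * (starRingEnd ℂ w) ^ j)) := by
    intro w
    have e1 : ((p / π * Real.exp (-p * ‖w‖ ^ 2) * ‖y + w‖ ^ (2 * n) : ℝ) : ℂ)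
        = ((p / π * Real.exp (-p * ‖w‖ ^ 2) : ℝ) : ℂ) * (((‖y + w‖^2 : ℝ) : ℂ)) ^ n := by
      push_cast
      rw [pow_mul]
    rw [e1, hz_mul_conj, map_add]
    rw [mul_pow, show y + w = w + y from add_comm _ _,
      show (starRingEnd ℂ) y + (starRingEnd ℂ) w = (starRingEnd ℂ) w + (starRingEnd ℂ) y
        from add_comm _ _, add_pow, add_pow]
    rw [Finset.sum_mul_sum, Finset.mul_sum]
    refine Finset.sum_congr rfl fun i _ => ?_
    rw [Finset.mul_sum]
    refine Finset.sum_congr rfl fun j _ => ?_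
    ring
  have goal2 : ∑ k ∈ Finset.range (n + 1),
      (n.factorial : ℝ) ^ 2 / (((n - k).factorial : ℝ) * ((k.factorial : ℝ)) ^ 2)
        * ‖y‖ ^ (2 * k) / p ^ (n - k)
      = ∑ k ∈ Finset.range (n + 1),
      (n.factorial : ℝ) ^ 2 / (((n - k).factorial : ℝ) * ((k.factorial : ℝ)) ^ 2)
        * (‖y‖^2) ^ k / p ^ (n - k) :=
    Finset.sum_congr rfl fun k _ => by rw [pow_mul]
  have key : ((∫ w : ℂ, p / π * Real.exp (-p * ‖w‖ ^ 2) * ‖y + w‖ ^ (2 * n) : ℝ) : ℂ)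
      = ((∑ k ∈ Finset.range (n + 1),
          (n.factorial : ℝ) ^ 2 / (((n - k).factorial : ℝ) * ((k.factorial : ℝ)) ^ 2)
            * ‖y‖ ^ (2 * k) / p ^ (n - k) : ℝ) : ℂ) := by
    calc ((∫ w : ℂ, p / π * Real.exp (-p * ‖w‖ ^ 2) * ‖y + w‖ ^ (2 * n) : ℝ) : ℂ)
        = ∫ w : ℂ, ((p / π * Real.exp (-p * ‖w‖ ^ 2) * ‖y + w‖ ^ (2 * n) : ℝ) : ℂ) :=
          integral_ofReal.symm
      _ = ∫ w : ℂ, ∑ i ∈ Finset.range (n+1), ∑ j ∈ Finset.range (n+1),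
            (y ^ (n - i) * (starRingEnd ℂ y) ^ (n - j) * (n.choose i : ℂ) * (n.choose j : ℂ))
              * (((p / π * Real.exp (-p * ‖w‖ ^ 2) : ℝ) : ℂ)
                * (w ^ i * (starRingEnd ℂ w) ^ j)) := by
          exact integral_congr_ae (Filter.Eventually.of_forall hpt)
      _ = ∑ i ∈ Finset.range (n+1), ∑ j ∈ Finset.range (n+1),
            (y ^ (n - i) * (starRingEnd ℂ y) ^ (n - j) * (n.choose i : ℂ) * (n.choose j : ℂ))
              * ∫ w : ℂ, (((p / π * Real.exp (-p * ‖w‖ ^ 2) : ℝ) : ℂ)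
                * (w ^ i * (starRingEnd ℂ w) ^ j)) := by
          rw [integral_finset_sum _ (fun i _ => integrable_finset_sum _
            (fun j _ => (intg_term hp i j).const_mul _))]
          refine Finset.sum_congr rfl fun i _ => ?_
          rw [integral_finset_sum _ (fun j _ => (intg_term hp i j).const_mul _)]
          exact Finset.sum_congr rfl fun j _ => integral_const_mul _ _
      _ = ∑ i ∈ Finset.range (n+1),
            (y ^ (n - i) * (starRingEnd ℂ y) ^ (n - i) * (n.choose i : ℂ) * (n.choose i : ℂ))
              * (((i.factorial : ℝ) / p ^ i : ℝ) : ℂ) := by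
          refine Finset.sum_congr rfl fun i hi => ?_
          rw [Finset.sum_eq_single_of_mem i hi ?side]
          · congr 1
            have hfun : (fun w : ℂ => ((p / π * Real.exp (-p * ‖w‖ ^ 2) : ℝ) : ℂ)
                * (w ^ i * (starRingEnd ℂ w) ^ i))
                = fun w : ℂ => ((p / π * Real.exp (-p * ‖w‖ ^ 2) * ‖w‖ ^ (2 * i) : ℝ) : ℂ) := by
              funext w
              rw [show w ^ i * (starRingEnd ℂ w) ^ i = (((‖w‖^2 : ℝ) : ℂ)) ^ i by
                rw [← mul_pow, hz_mul_conj]]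
              push_cast
              rw [pow_mul]
            rw [hfun]
            rw [show (∫ w : ℂ, ((p / π * Real.exp (-p * ‖w‖ ^ 2) * ‖w‖ ^ (2 * i) : ℝ) : ℂ))
                = ((∫ w : ℂ, p / π * Real.exp (-p * ‖w‖ ^ 2) * ‖w‖ ^ (2 * i) : ℝ) : ℂ)
              from integral_ofReal, Kdiag hp i]
          case side =>
            intro j _ hj
            rw [Kzero hp (fun h => hj h.symm), mul_zero]
      _ = ((∑ k ∈ Finset.range (n + 1),
            (n.factorial : ℝ) ^ 2 / (((n - k).factorial : ℝ) * ((k.factorial : ℝ)) ^ 2)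
              * ‖y‖ ^ (2 * k) / p ^ (n - k) : ℝ) : ℂ) := by
          rw [goal2, ← real_sum hp.ne' n (‖y‖^2)]
          push_cast
          refine Finset.sum_congr rfl fun i hi => ?_
          rw [show y ^ (n - i) * (starRingEnd ℂ y) ^ (n - i)
              = (((‖y‖^2 : ℝ) : ℂ)) ^ (n - i) by rw [← mul_pow, hz_mul_conj]]
          push_cast
          ring
  exact Complex.ofReal_injective key

lemma radial_eq (φ : ℝ → ℝ) :
    ∫ x : EuclideanSpace ℝ (Fin 2), φ ‖x‖ = 2 * π * ∫ r in Ioi (0:ℝ), r * φ r := by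
  have h := integral_fun_norm_addHaar (volume : Measure (EuclideanSpace ℝ (Fin 2))) φ
  rw [finrank_euclideanSpace] at h
  have hball : ((volume (ball (0 : EuclideanSpace ℝ (Fin 2)) 1)).toReal) = π := by
    rw [EuclideanSpace.volume_ball]
    have hΓ : Real.Gamma ((Fintype.card (Fin 2) : ℝ) / 2 + 1) = 1 := by
      norm_num
    rw [hΓ]
    simp [Real.sq_sqrt Real.pi_nonneg, Real.pi_nonneg]
  rw [measureReal_def, hball] at h
  simp only [Fintype.card_fin, smul_eq_mul, nsmul_eq_mul, Nat.cast_ofNat] at h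
  norm_num at h
  rw [h]; ring


end ConvMoments


open MeasureTheory Set Real

theorem convolved_moments
    (f : ℝ → ℝ) (F R₀ p : ℝ) (hp : 0 < p) (hR₀ : 0 < R₀)
    (hmeas : Measurable f)
    (hpos : ∀ r : ℝ, 0 ≤ r → 0 ≤ f r)
    (hbd : ∀ r : ℝ, 0 ≤ r → f r ≤ F)
    (hsupp : ∀ r : ℝ, R₀ < r → f r = 0)
    (c : ℕ → ℝ)
    (hc : ∀ n : ℕ, c n = 2 * π * ∫ r in Ioi (0:ℝ), f r * r ^ (2 * n + 1))
    (fc : ℝ → ℝ)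
    (hfc : ∀ r : ℝ, fc r = ∫ y : EuclideanSpace ℝ (Fin 2),
      f ‖y‖ * (p / π * Real.exp (-p * ‖EuclideanSpace.single (0 : Fin 2) r - y‖ ^ 2)))
    (c' : ℕ → ℝ)
    (hc' : ∀ n : ℕ, c' n = 2 * π * ∫ r in Ioi (0:ℝ), fc r * r ^ (2 * n + 1)) :
    (∀ n : ℕ, c' n = ∑ k ∈ Finset.range (n + 1),
      ((n.factorial : ℝ)) ^ 2 / (((n - k).factorial : ℝ) * ((k.factorial : ℝ)) ^ 2) *
        c k / p ^ (n - k)) ∧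
    c' 0 = c 0 ∧ c' 1 = c 0 / p + c 1 := by
  classical
  have hF : (0:ℝ) ≤ F := le_trans (hpos 0 le_rfl) (hbd 0 le_rfl)
  set S : ℂ ≃ₗᵢ[ℝ] EuclideanSpace ℝ (Fin 2) := Complex.orthonormalBasisOneI.repr with hS
  -- radial gaussian-moment integrability on E
  have hradE : ∀ m : ℕ, Integrable
      (fun z : EuclideanSpace ℝ (Fin 2) => ‖z‖ ^ m * Real.exp (-p * ‖z‖ ^ 2)) := by
    intro m
    refine (MeasureTheory.integrable_comp S
      (fun z : EuclideanSpace ℝ (Fin 2) => ‖z‖ ^ m * Real.exp (-p * ‖z‖ ^ 2))).mp ?_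
    refine (ConvMoments.intg_norm_pow_complex hp m).congr
      (Filter.Eventually.of_forall fun w => ?_)
    simp [Function.comp_def, S.norm_map]
  -- integrability of f-moments on E
  have hI1 : ∀ m : ℕ, Integrable
      (fun y : EuclideanSpace ℝ (Fin 2) => f ‖y‖ * ‖y‖ ^ m) := by
    intro m
    have hind : Integrable ((Metric.closedBall (0 : EuclideanSpace ℝ (Fin 2)) R₀).indicator
        (fun _ => F * R₀ ^ m)) :=
      IntegrableOn.integrable_indicator
        (integrableOn_const measure_closedBall_lt_top.ne) measurableSet_closedBall
    refine hind.mono' ?_ ?_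
    · exact ((hmeas.comp measurable_norm).mul
        (measurable_norm.pow_const m)).aestronglyMeasurable
    · filter_upwards with y
      rcases le_or_gt ‖y‖ R₀ with hy | hy
      · have h0 : 0 ≤ f ‖y‖ := hpos _ (norm_nonneg y)
        rw [Real.norm_eq_abs,
          abs_of_nonneg (mul_nonneg h0 (pow_nonneg (norm_nonneg y) m)),
          Set.indicator_of_mem (mem_closedBall_zero_iff.mpr hy)]
        exact mul_le_mul (hbd _ (norm_nonneg y)) (pow_le_pow_left₀ (norm_nonneg y) hy m)
          (pow_nonneg (norm_nonneg y) m) hF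
      · rw [hsupp _ hy, zero_mul, norm_zero]
        exact Set.indicator_nonneg (fun _ _ => mul_nonneg hF (pow_nonneg hR₀.le m)) y
  -- values of f-moments
  have hck : ∀ m : ℕ,
      (∫ y : EuclideanSpace ℝ (Fin 2), f ‖y‖ * ‖y‖ ^ (2 * m)) = c m := by
    intro m
    rw [hc m, ConvMoments.radial_eq (fun r => f r * r ^ (2 * m))]
    congr 1
    exact setIntegral_congr_fun measurableSet_Ioi (fun r hr => by ring)
  -- rotation invariance of fc
  have hrot : ∀ x : EuclideanSpace ℝ (Fin 2), fc ‖x‖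
      = ∫ y : EuclideanSpace ℝ (Fin 2),
          f ‖y‖ * (p / π * Real.exp (-p * ‖x - y‖ ^ 2)) := by
    intro x
    rw [hfc ‖x‖]
    have hnorm : ‖EuclideanSpace.single (0 : Fin 2) ‖x‖‖ = ‖x‖ := by
      rw [EuclideanSpace.norm_single, Real.norm_eq_abs, abs_of_nonneg (norm_nonneg x)]
    set v := EuclideanSpace.single (0 : Fin 2) ‖x‖ with hv
    set T := Submodule.reflection (Submodule.span ℝ {v - x})ᗮ with hT
    have hTv : T v = x := Submodule.reflection_sub hnorm
    have hcomp := MeasureTheory.integral_comp T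
      (fun y => f ‖y‖ * (p / π * Real.exp (-p * ‖x - y‖ ^ 2)))
    rw [← hcomp]
    refine integral_congr_ae (Filter.Eventually.of_forall fun z => ?_)
    have h1 : ‖x - T z‖ = ‖v - z‖ := by
      rw [← hTv, ← map_sub, T.norm_map]
    show f ‖z‖ * (p / π * Real.exp (-p * ‖v - z‖ ^ 2))
      = f ‖T z‖ * (p / π * Real.exp (-p * ‖x - T z‖ ^ 2))
    rw [h1, T.norm_map]
  -- main formula
  have main : ∀ n : ℕ, c' n = ∑ k ∈ Finset.range (n + 1),
      ((n.factorial : ℝ)) ^ 2 / (((n - k).factorial : ℝ) * ((k.factorial : ℝ)) ^ 2) *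
        c k / p ^ (n - k) := by
    intro n
    have hA : c' n = ∫ x : EuclideanSpace ℝ (Fin 2), fc ‖x‖ * ‖x‖ ^ (2 * n) := by
      rw [hc' n, ConvMoments.radial_eq (fun r => fc r * r ^ (2 * n))]
      congr 1
      exact setIntegral_congr_fun measurableSet_Ioi (fun r hr => by ring)
    -- Fubini integrability
    have hint : Integrable (Function.uncurry
        (fun x y : EuclideanSpace ℝ (Fin 2) =>
          f ‖y‖ * (p / π * Real.exp (-p * ‖x - y‖ ^ 2)) * ‖x‖ ^ (2 * n)))
        (volume.prod volume) := by
      let e : (EuclideanSpace ℝ (Fin 2) × EuclideanSpace ℝ (Fin 2)) ≃ᵐ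
          (EuclideanSpace ℝ (Fin 2) × EuclideanSpace ℝ (Fin 2)) :=
        { toFun := fun q => (q.1 - q.2, q.2)
          invFun := fun q => (q.1 + q.2, q.2)
          left_inv := fun q => by simp
          right_inv := fun q => by simp
          measurable_toFun := (measurable_fst.sub measurable_snd).prodMk measurable_snd
          measurable_invFun := (measurable_fst.add measurable_snd).prodMk measurable_snd }
      have hmp : MeasurePreserving (⇑e) (volume.prod volume) (volume.prod volume) :=
        measurePreserving_sub_prod volume volume
      set Ψ : EuclideanSpace ℝ (Fin 2) × EuclideanSpace ℝ (Fin 2) → ℝ :=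
        fun q => f ‖q.2‖ *
          (p / π * Real.exp (-p * ‖q.1‖ ^ 2) * ‖q.1 + q.2‖ ^ (2 * n)) with hΨ
      have h2 : Integrable (fun z : EuclideanSpace ℝ (Fin 2) =>
          p / π * Real.exp (-p * ‖z‖ ^ 2) * (‖z‖ + R₀) ^ (2 * n)) := by
        have hs : Integrable (fun z : EuclideanSpace ℝ (Fin 2) =>
            ∑ t ∈ Finset.range (2 * n + 1),
              (p / π * ((2 * n).choose t : ℝ) * R₀ ^ (2 * n - t)) *
                (‖z‖ ^ t * Real.exp (-p * ‖z‖ ^ 2))) :=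
          integrable_finset_sum _ fun t _ => (hradE t).const_mul _
        refine hs.congr (Filter.Eventually.of_forall fun z => ?_)
        show ∑ t ∈ Finset.range (2 * n + 1),
              (p / π * ((2 * n).choose t : ℝ) * R₀ ^ (2 * n - t)) *
                (‖z‖ ^ t * Real.exp (-p * ‖z‖ ^ 2))
            = p / π * Real.exp (-p * ‖z‖ ^ 2) * (‖z‖ + R₀) ^ (2 * n)
        rw [add_pow, Finset.mul_sum]
        exact Finset.sum_congr rfl fun t _ => by ring
      have h1 : Integrable ((Metric.closedBall (0 : EuclideanSpace ℝ (Fin 2)) R₀).indicator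
          (fun _ => F)) :=
        IntegrableOn.integrable_indicator
          (integrableOn_const measure_closedBall_lt_top.ne) measurableSet_closedBall
      have hΨint : Integrable Ψ (volume.prod volume) := by
        refine (h2.mul_prod h1).mono' ?_ ?_
        · apply Measurable.aestronglyMeasurable
          have hg2m : Measurable fun q :
              EuclideanSpace ℝ (Fin 2) × EuclideanSpace ℝ (Fin 2) =>
              p / π * Real.exp (-p * ‖q.1‖ ^ 2) * ‖q.1 + q.2‖ ^ (2 * n) := by
            fun_prop
          exact (hmeas.comp (measurable_norm.comp measurable_snd)).mul hg2m
        · filter_upwards with q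
          have hg0 : (0:ℝ) ≤ p / π * Real.exp (-p * ‖q.1‖ ^ 2) :=
            mul_nonneg (div_nonneg hp.le Real.pi_pos.le) (Real.exp_pos _).le
          rcases le_or_gt ‖q.2‖ R₀ with hy | hy
          · have h0 : 0 ≤ f ‖q.2‖ := hpos _ (norm_nonneg _)
            simp only [hΨ]
            rw [Real.norm_eq_abs, abs_of_nonneg (mul_nonneg h0
              (mul_nonneg hg0 (pow_nonneg (norm_nonneg _) _)))]
            rw [Set.indicator_of_mem (mem_closedBall_zero_iff.mpr hy)]
            have hb1 : ‖q.1 + q.2‖ ^ (2 * n) ≤ (‖q.1‖ + R₀) ^ (2 * n) :=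
              pow_le_pow_left₀ (norm_nonneg _)
                ((norm_add_le _ _).trans (by linarith)) _
            calc f ‖q.2‖ * (p / π * Real.exp (-p * ‖q.1‖ ^ 2) * ‖q.1 + q.2‖ ^ (2 * n))
                ≤ F * (p / π * Real.exp (-p * ‖q.1‖ ^ 2) * (‖q.1‖ + R₀) ^ (2 * n)) := by
                  refine mul_le_mul (hbd _ (norm_nonneg _)) ?_
                    (mul_nonneg hg0 (pow_nonneg (norm_nonneg _) _)) hF
                  exact mul_le_mul_of_nonneg_left hb1 hg0
              _ = p / π * Real.exp (-p * ‖q.1‖ ^ 2) * (‖q.1‖ + R₀) ^ (2 * n) * F := by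
                  ring
          · simp only [hΨ]
            rw [hsupp _ hy, zero_mul, norm_zero]
            rw [Set.indicator_of_notMem (by
              simpa [mem_closedBall_zero_iff] using not_le.mpr hy), mul_zero]
      have heq : Function.uncurry
          (fun x y : EuclideanSpace ℝ (Fin 2) =>
            f ‖y‖ * (p / π * Real.exp (-p * ‖x - y‖ ^ 2)) * ‖x‖ ^ (2 * n)) = Ψ ∘ ⇑e := by
        funext q
        show f ‖q.2‖ * (p / π * Real.exp (-p * ‖q.1 - q.2‖ ^ 2)) * ‖q.1‖ ^ (2 * n)
          = f ‖q.2‖ *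
            (p / π * Real.exp (-p * ‖q.1 - q.2‖ ^ 2) * ‖q.1 - q.2 + q.2‖ ^ (2 * n))
        rw [sub_add_cancel]
        ring
      rw [heq]
      exact (hmp.integrable_comp_emb e.measurableEmbedding).mpr hΨint
    have hswap := MeasureTheory.integral_integral_swap hint
    calc c' n = ∫ x : EuclideanSpace ℝ (Fin 2), fc ‖x‖ * ‖x‖ ^ (2 * n) := hA
      _ = ∫ x : EuclideanSpace ℝ (Fin 2), ∫ y : EuclideanSpace ℝ (Fin 2),
            f ‖y‖ * (p / π * Real.exp (-p * ‖x - y‖ ^ 2)) * ‖x‖ ^ (2 * n) := by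
          refine integral_congr_ae (Filter.Eventually.of_forall fun x => ?_)
          beta_reduce
          rw [hrot x, ← integral_mul_const]
      _ = ∫ y : EuclideanSpace ℝ (Fin 2), ∫ x : EuclideanSpace ℝ (Fin 2),
            f ‖y‖ * (p / π * Real.exp (-p * ‖x - y‖ ^ 2)) * ‖x‖ ^ (2 * n) := hswap
      _ = ∫ y : EuclideanSpace ℝ (Fin 2), f ‖y‖ *
            ∑ k ∈ Finset.range (n + 1),
              (n.factorial : ℝ) ^ 2 / (((n - k).factorial : ℝ) * ((k.factorial : ℝ)) ^ 2)
                * ‖y‖ ^ (2 * k) / p ^ (n - k) := by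
          refine integral_congr_ae (Filter.Eventually.of_forall fun y => ?_)
          beta_reduce
          have e1 : ∫ x : EuclideanSpace ℝ (Fin 2),
              f ‖y‖ * (p / π * Real.exp (-p * ‖x - y‖ ^ 2)) * ‖x‖ ^ (2 * n)
              = f ‖y‖ * ∫ x : EuclideanSpace ℝ (Fin 2),
                  p / π * Real.exp (-p * ‖x - y‖ ^ 2) * ‖x‖ ^ (2 * n) := by
            rw [← integral_const_mul]
            refine integral_congr_ae (Filter.Eventually.of_forall fun x => ?_)
            beta_reduce
            ring
          have e2 : ∫ x : EuclideanSpace ℝ (Fin 2),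
              p / π * Real.exp (-p * ‖x - y‖ ^ 2) * ‖x‖ ^ (2 * n)
              = ∫ z : EuclideanSpace ℝ (Fin 2),
                  p / π * Real.exp (-p * ‖z‖ ^ 2) * ‖z + y‖ ^ (2 * n) := by
            rw [← integral_add_right_eq_self
              (fun x : EuclideanSpace ℝ (Fin 2) =>
                p / π * Real.exp (-p * ‖x - y‖ ^ 2) * ‖x‖ ^ (2 * n)) y]
            refine integral_congr_ae (Filter.Eventually.of_forall fun z => ?_)
            beta_reduce
            rw [add_sub_cancel_right]
          have e3 : ∫ z : EuclideanSpace ℝ (Fin 2),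
              p / π * Real.exp (-p * ‖z‖ ^ 2) * ‖z + y‖ ^ (2 * n)
              = ∑ k ∈ Finset.range (n + 1),
                  (n.factorial : ℝ) ^ 2 / (((n - k).factorial : ℝ) * ((k.factorial : ℝ)) ^ 2)
                    * ‖y‖ ^ (2 * k) / p ^ (n - k) := by
            have hcmp := MeasureTheory.integral_comp S
              (fun z : EuclideanSpace ℝ (Fin 2) =>
                p / π * Real.exp (-p * ‖z‖ ^ 2) * ‖z + y‖ ^ (2 * n))
            rw [← hcmp]
            have hpt : ∀ w : ℂ,
                p / π * Real.exp (-p * ‖S w‖ ^ 2) * ‖S w + y‖ ^ (2 * n)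
                = p / π * Real.exp (-p * ‖w‖ ^ 2) * ‖S.symm y + w‖ ^ (2 * n) := by
              intro w
              rw [S.norm_map,
                show S w + y = S (w + S.symm y) by rw [map_add, S.apply_symm_apply],
                S.norm_map, add_comm w]
            rw [integral_congr_ae (Filter.Eventually.of_forall hpt),
              ConvMoments.gauss_moment hp n (S.symm y)]
            exact Finset.sum_congr rfl fun k _ => by rw [S.symm.norm_map]
          rw [e1, e2, e3]
      _ = ∑ k ∈ Finset.range (n + 1),
            ((n.factorial : ℝ) ^ 2 / (((n - k).factorial : ℝ) * ((k.factorial : ℝ)) ^ 2)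
              / p ^ (n - k)) *
              ∫ y : EuclideanSpace ℝ (Fin 2), f ‖y‖ * ‖y‖ ^ (2 * k) := by
          have h6 : (∫ y : EuclideanSpace ℝ (Fin 2), f ‖y‖ *
              ∑ k ∈ Finset.range (n + 1),
                (n.factorial : ℝ) ^ 2 / (((n - k).factorial : ℝ) * ((k.factorial : ℝ)) ^ 2)
                  * ‖y‖ ^ (2 * k) / p ^ (n - k))
              = ∫ y : EuclideanSpace ℝ (Fin 2),
                ∑ k ∈ Finset.range (n + 1),
                  ((n.factorial : ℝ) ^ 2 / (((n - k).factorial : ℝ) * ((k.factorial : ℝ)) ^ 2)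
                    / p ^ (n - k)) * (f ‖y‖ * ‖y‖ ^ (2 * k)) := by
            refine integral_congr_ae (Filter.Eventually.of_forall fun y => ?_)
            beta_reduce
            rw [Finset.mul_sum]
            exact Finset.sum_congr rfl fun k _ => by ring
          rw [h6, integral_finset_sum _ (fun k _ => (hI1 (2 * k)).const_mul _)]
          exact Finset.sum_congr rfl fun k _ => integral_const_mul _ _
      _ = ∑ k ∈ Finset.range (n + 1),
            ((n.factorial : ℝ)) ^ 2 / (((n - k).factorial : ℝ) * ((k.factorial : ℝ)) ^ 2) *
              c k / p ^ (n - k) := by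
          refine Finset.sum_congr rfl fun k _ => ?_
          rw [hck k]
          ring
  refine ⟨main, ?_, ?_⟩
  · rw [main 0]
    simp [Nat.factorial]
  · rw [main 1, Finset.sum_range_succ, Finset.sum_range_one]
    norm_num [Nat.factorial]
end
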